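/- arXiv:2303.04560 — 6 statements merged into one kernel-verified Lean document; each statement's English description precedes it below -/
import Mathlib

section
/- Let f : ℝ^d → ℝ be differentiable and μ-strongly convex (μ > 0) with minimizer x*. Fix x ∈ ℝ^d and γ > 0, and let ĝ, ḡ be square-integrable ℝ^d-valued random vectors on a probability space with E[ḡ] = ∇f(x). Then for x⁺ = x − γ·ĝ one has E[‖x⁺ − x*‖²] ≤ (1 + γμ/2)‖x − x*‖² − 2γ⟨x − x*, ∇f(x)⟩ + 2γ²·E[‖ḡ‖²] + 2γ(1/μ + γ)·E[‖ĝ − ḡ‖²], and, using strong convexity, E[‖x⁺ − x*‖²] ≤ (1 − γμ/2)‖x − x*‖² − 2γ(f(x) − f(x*)) + 2γ²·E[‖ḡ‖²] + 2γ(1/μ + γ)·E[‖ĝ − ḡ‖²]. -/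
open MeasureTheory
open scoped InnerProductSpace

lemma ptwise_bound {d : ℕ} (e h b : EuclideanSpace ℝ (Fin d)) {γ μ : ℝ}
    (hγ : 0 < γ) (hμ : 0 < μ) :
    ‖e - γ • h‖ ^ 2 ≤ (1 + γ * μ / 2) * ‖e‖ ^ 2 - 2 * γ * ⟪e, b⟫_ℝ
      + 2 * γ ^ 2 * ‖b‖ ^ 2 + 2 * γ * (1 / μ + γ) * ‖h - b‖ ^ 2 := by
  have hexp : ‖e - γ • h‖ ^ 2 = ‖e‖ ^ 2 - 2 * (γ * ⟪e, h⟫_ℝ) + γ ^ 2 * ‖h‖ ^ 2 := by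
    rw [norm_sub_sq_real, real_inner_smul_right, norm_smul, Real.norm_eq_abs, mul_pow, sq_abs]
  have hsplit : ⟪e, h⟫_ℝ = ⟪e, b⟫_ℝ + ⟪e, h - b⟫_ℝ := by
    rw [← inner_add_right]; congr 1; abel
  have hH : ‖h‖ ≤ ‖b‖ + ‖h - b‖ := by
    calc ‖h‖ = ‖b + (h - b)‖ := by congr 1; abel
    _ ≤ ‖b‖ + ‖h - b‖ := norm_add_le _ _
  have hH2 : ‖h‖ ^ 2 ≤ 2 * ‖b‖ ^ 2 + 2 * ‖h - b‖ ^ 2 := by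
    nlinarith [norm_nonneg h, norm_nonneg b, norm_nonneg (h - b), sq_nonneg (‖b‖ - ‖h - b‖)]
  have hI2 : -⟪e, h - b⟫_ℝ ≤ ‖e‖ * ‖h - b‖ := by
    have := abs_real_inner_le_norm e (h - b)
    cases abs_le.mp this with | intro h1 h2 => linarith
  have key : 2 * (‖e‖ * ‖h - b‖) ≤ μ / 2 * ‖e‖ ^ 2 + 2 / μ * ‖h - b‖ ^ 2 := by
    have h2μ : (0:ℝ) < 2 * μ := by positivity
    have : (2 * (‖e‖ * ‖h - b‖)) * (2 * μ) ≤ (μ / 2 * ‖e‖ ^ 2 + 2 / μ * ‖h - b‖ ^ 2) * (2 * μ) := by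
      field_simp
      nlinarith [sq_nonneg (μ * ‖e‖ - 2 * ‖h - b‖)]
    exact le_of_mul_le_mul_right this h2μ
  rw [hexp, hsplit]
  have k1 : γ * (2 * (‖e‖ * ‖h - b‖)) ≤ γ * (μ / 2 * ‖e‖ ^ 2 + 2 / μ * ‖h - b‖ ^ 2) :=
    mul_le_mul_of_nonneg_left key hγ.le
  have k2 : γ ^ 2 * ‖h‖ ^ 2 ≤ γ ^ 2 * (2 * ‖b‖ ^ 2 + 2 * ‖h - b‖ ^ 2) :=
    mul_le_mul_of_nonneg_left hH2 (sq_nonneg γ)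
  have k3 : (2 * γ) * (-⟪e, h - b⟫_ℝ) ≤ (2 * γ) * (‖e‖ * ‖h - b‖) :=
    mul_le_mul_of_nonneg_left hI2 (by positivity)
  ring_nf at k1 k2 k3 ⊢
  linarith

/-- One step of a gradient-type method with a biased estimator: descent inequalities for
`x⁺ = x - γ ĝ` when `E[ḡ] = ∇f(x)`. -/
theorem one_step_descent_with_bias
    {d : ℕ} (f : EuclideanSpace ℝ (Fin d) → ℝ) (μc : ℝ) (hμ : 0 < μc)
    (hdiff : Differentiable ℝ f)
    (hstrong : ∀ x y : EuclideanSpace ℝ (Fin d),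
      f x + ⟪gradient f x, y - x⟫_ℝ + μc / 2 * ‖y - x‖ ^ 2 ≤ f y)
    (xstar : EuclideanSpace ℝ (Fin d)) (hmin : ∀ y, f xstar ≤ f y)
    (x : EuclideanSpace ℝ (Fin d)) (γ : ℝ) (hγ : 0 < γ)
    {Ω : Type*} {m0 : MeasurableSpace Ω} (P : Measure Ω) [IsProbabilityMeasure P]
    (ghat gbar : Ω → EuclideanSpace ℝ (Fin d))
    (hghat : MemLp ghat 2 P) (hgbar : MemLp gbar 2 P)
    (hmean : ∫ ω, gbar ω ∂P = gradient f x) :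
    ((∫ ω, ‖(x - γ • ghat ω) - xstar‖ ^ 2 ∂P)
      ≤ (1 + γ * μc / 2) * ‖x - xstar‖ ^ 2 - 2 * γ * ⟪x - xstar, gradient f x⟫_ℝ
        + 2 * γ ^ 2 * (∫ ω, ‖gbar ω‖ ^ 2 ∂P)
        + 2 * γ * (1 / μc + γ) * (∫ ω, ‖ghat ω - gbar ω‖ ^ 2 ∂P))
    ∧ ((∫ ω, ‖(x - γ • ghat ω) - xstar‖ ^ 2 ∂P)
      ≤ (1 - γ * μc / 2) * ‖x - xstar‖ ^ 2 - 2 * γ * (f x - f xstar)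
        + 2 * γ ^ 2 * (∫ ω, ‖gbar ω‖ ^ 2 ∂P)
        + 2 * γ * (1 / μc + γ) * (∫ ω, ‖ghat ω - gbar ω‖ ^ 2 ∂P)) := by
  set e := x - xstar with he
  -- integrability facts
  have hgbar_int : Integrable gbar P := hgbar.integrable (by norm_num)
  have hgbar_sq : Integrable (fun ω => ‖gbar ω‖ ^ 2) P :=
    (memLp_two_iff_integrable_sq_norm hgbar.1).mp hgbar
  have hdiffmem : MemLp (fun ω => ghat ω - gbar ω) 2 P := hghat.sub hgbar
  have hdiff_sq : Integrable (fun ω => ‖ghat ω - gbar ω‖ ^ 2) P :=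
    (memLp_two_iff_integrable_sq_norm hdiffmem.1).mp hdiffmem
  have hinner_int : Integrable (fun ω => ⟪e, gbar ω⟫_ℝ) P := hgbar_int.const_inner e
  have hinner_eq : (∫ ω, ⟪e, gbar ω⟫_ℝ ∂P) = ⟪e, gradient f x⟫_ℝ := by
    rw [integral_inner hgbar_int, hmean]
  -- the dominating integrable function
  have hGint : Integrable (fun ω =>
      (1 + γ * μc / 2) * ‖e‖ ^ 2 - 2 * γ * ⟪e, gbar ω⟫_ℝ
        + 2 * γ ^ 2 * ‖gbar ω‖ ^ 2 + 2 * γ * (1 / μc + γ) * ‖ghat ω - gbar ω‖ ^ 2) P := by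
    exact (((integrable_const _).sub (hinner_int.const_mul _)).add
      (hgbar_sq.const_mul _)).add (hdiff_sq.const_mul _)
  have hmono : (∫ ω, ‖(x - γ • ghat ω) - xstar‖ ^ 2 ∂P)
      ≤ ∫ ω, ((1 + γ * μc / 2) * ‖e‖ ^ 2 - 2 * γ * ⟪e, gbar ω⟫_ℝ
        + 2 * γ ^ 2 * ‖gbar ω‖ ^ 2 + 2 * γ * (1 / μc + γ) * ‖ghat ω - gbar ω‖ ^ 2) ∂P := by
    apply integral_mono_of_nonneg (Filter.Eventually.of_forall fun ω => by positivity) hGint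
    apply Filter.Eventually.of_forall
    intro ω
    dsimp only
    have : x - γ • ghat ω - xstar = e - γ • ghat ω := by rw [he]; abel
    rw [this]
    exact ptwise_bound e (ghat ω) (gbar ω) hγ hμ
  have hsplitint : (∫ ω, ((1 + γ * μc / 2) * ‖e‖ ^ 2 - 2 * γ * ⟪e, gbar ω⟫_ℝ
        + 2 * γ ^ 2 * ‖gbar ω‖ ^ 2 + 2 * γ * (1 / μc + γ) * ‖ghat ω - gbar ω‖ ^ 2) ∂P)
      = (1 + γ * μc / 2) * ‖e‖ ^ 2 - 2 * γ * ⟪e, gradient f x⟫_ℝ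
        + 2 * γ ^ 2 * (∫ ω, ‖gbar ω‖ ^ 2 ∂P)
        + 2 * γ * (1 / μc + γ) * (∫ ω, ‖ghat ω - gbar ω‖ ^ 2 ∂P) := by
    have hA : Integrable (fun ω => (1 + γ * μc / 2) * ‖e‖ ^ 2 - 2 * γ * ⟪e, gbar ω⟫_ℝ) P :=
      (integrable_const _).sub (hinner_int.const_mul _)
    have hB : Integrable (fun ω => (1 + γ * μc / 2) * ‖e‖ ^ 2 - 2 * γ * ⟪e, gbar ω⟫_ℝ
        + 2 * γ ^ 2 * ‖gbar ω‖ ^ 2) P := hA.add (hgbar_sq.const_mul _)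
    rw [integral_add hB (hdiff_sq.const_mul _), integral_add hA (hgbar_sq.const_mul _),
      integral_sub (integrable_const _) (hinner_int.const_mul _),
      integral_const, integral_const_mul, integral_const_mul, integral_const_mul, hinner_eq]
    simp
  have first : (∫ ω, ‖(x - γ • ghat ω) - xstar‖ ^ 2 ∂P)
      ≤ (1 + γ * μc / 2) * ‖e‖ ^ 2 - 2 * γ * ⟪e, gradient f x⟫_ℝ
        + 2 * γ ^ 2 * (∫ ω, ‖gbar ω‖ ^ 2 ∂P)
        + 2 * γ * (1 / μc + γ) * (∫ ω, ‖ghat ω - gbar ω‖ ^ 2 ∂P) := by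
    rw [← hsplitint]; exact hmono
  refine ⟨first, ?_⟩
  -- strong convexity step
  have hsc := hstrong x xstar
  have hswap : ⟪gradient f x, xstar - x⟫_ℝ = -⟪e, gradient f x⟫_ℝ := by
    rw [real_inner_comm, he, ← inner_neg_left]
    congr 1; abel
  have hnrev : ‖xstar - x‖ = ‖e‖ := by rw [he, norm_sub_rev]
  rw [hswap, hnrev] at hsc
  -- ⟪e, ∇f x⟫ ≥ f x - f xstar + μc/2 ‖e‖²
  have hlow : f x - f xstar + μc / 2 * ‖e‖ ^ 2 ≤ ⟪e, gradient f x⟫_ℝ := by linarith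
  have hmul : (2 * γ) * (f x - f xstar + μc / 2 * ‖e‖ ^ 2) ≤ (2 * γ) * ⟪e, gradient f x⟫_ℝ :=
    mul_le_mul_of_nonneg_left hlow (by positivity)
  calc (∫ ω, ‖(x - γ • ghat ω) - xstar‖ ^ 2 ∂P)
      ≤ (1 + γ * μc / 2) * ‖e‖ ^ 2 - 2 * γ * ⟪e, gradient f x⟫_ℝ
        + 2 * γ ^ 2 * (∫ ω, ‖gbar ω‖ ^ 2 ∂P)
        + 2 * γ * (1 / μc + γ) * (∫ ω, ‖ghat ω - gbar ω‖ ^ 2 ∂P) := first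
    _ ≤ (1 - γ * μc / 2) * ‖e‖ ^ 2 - 2 * γ * (f x - f xstar)
        + 2 * γ ^ 2 * (∫ ω, ‖gbar ω‖ ^ 2 ∂P)
        + 2 * γ * (1 / μc + γ) * (∫ ω, ‖ghat ω - gbar ω‖ ^ 2 ∂P) := by nlinarith [hmul]
end

section
/- Under Assumption 1, for any x ∈ ℝ^d, any batch size b ≥ 1, and any points {w_i}_{i∈𝒢} indexed by a finite nonempty set 𝒢 of size G, the averaged SVRG estimator satisfies (1/m^{bG}) Σ_{(J_i)_{i∈𝒢} ∈ ({1,…,m}^b)^𝒢} ‖(1/G) Σ_{i∈𝒢} g(x, w_i, J_i)‖² ≤ 4L·(f(x) − f(x*)) + 2σ_*², where σ_*² = (1/(Gm)) Σ_{i∈𝒢} Σ_{j=1}^m ‖∇f_j(w_i) − ∇f_j(x*)‖². -/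
open Finset
open scoped BigOperators InnerProductSpace


open scoped RealInnerProductSpace

section Aux
variable {V : Type*} [NormedAddCommGroup V] [InnerProductSpace ℝ V] [CompleteSpace V]

lemma hasGradientAt_const_inner (c z : V) : HasGradientAt (fun y => ⟪c, y⟫_ℝ) c z := by
  rw [hasGradientAt_iff_hasFDerivAt]
  exact (InnerProductSpace.toDual ℝ V c).hasFDerivAt

lemma HasGradientAt.sub' {f g : V → ℝ} {f' g' : V} {z : V}
    (hf : HasGradientAt f f' z) (hg : HasGradientAt g g' z) :
    HasGradientAt (fun y => f y - g y) (f' - g') z := by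
  rw [hasGradientAt_iff_hasFDerivAt] at *
  rw [map_sub]; exact hf.sub hg

/-- derivative of the function along a segment -/
lemma hasDerivAt_line {g : V → ℝ} {g' : V → V}
    (hg : ∀ z, HasGradientAt g (g' z) z) (v u : V) (t : ℝ) :
    HasDerivAt (fun s : ℝ => g (v + s • (u - v))) (⟪g' (v + t • (u - v)), u - v⟫_ℝ) t := by
  have hline : HasDerivAt (fun s : ℝ => v + s • (u - v)) (u - v) t := by
    simpa using ((hasDerivAt_id t).smul_const (u - v)).const_add v
  have hgz := (hg (v + t • (u - v)))
  rw [hasGradientAt_iff_hasFDerivAt] at hgz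
  have := hgz.comp_hasDerivAt t hline
  simpa [InnerProductSpace.toDual_apply_apply, Function.comp_def] using this

/-- first-order lower bound for convex differentiable functions -/
lemma convex_lower {g : V → ℝ} {g' : V → V}
    (hg : ∀ z, HasGradientAt g (g' z) z) (hc : ConvexOn ℝ Set.univ g) (v u : V) :
    g v + ⟪g' v, u - v⟫_ℝ ≤ g u := by
  set φ : ℝ → ℝ := fun s => g (v + s • (u - v)) with hφ
  have hconvφ : ConvexOn ℝ Set.univ φ := by
    have := hc.comp_affineMap (AffineMap.lineMap v u)
    have hpre : (AffineMap.lineMap v u : ℝ →ᵃ[ℝ] V) ⁻¹' Set.univ = Set.univ := by simp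
    rw [hpre] at this
    have heq : φ = g ∘ (AffineMap.lineMap v u) := by
      ext s; simp [φ, AffineMap.lineMap_apply, add_comm]
    rw [heq]; exact this
  have hder : HasDerivAt φ (⟪g' v, u - v⟫_ℝ) 0 := by
    simpa using hasDerivAt_line hg v u 0
  have h01 : (0 : ℝ) < 1 := one_pos
  have := hconvφ.le_slope_of_hasDerivAt (Set.mem_univ 0) (Set.mem_univ 1) h01 hder
  rw [slope_def_field] at this
  have h0 : φ 0 = g v := by simp [φ]
  have h1 : φ 1 = g u := by simp [φ]
  rw [h0, h1] at this
  simp only [div_one, sub_zero] at this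
  linarith [this]

/-- descent lemma for functions with Lipschitz gradient -/
lemma descent_lemma {g : V → ℝ} {g' : V → V} {L : ℝ} (hL : 0 < L)
    (hg : ∀ z, HasGradientAt g (g' z) z)
    (hlip : ∀ p q, ‖g' p - g' q‖ ≤ L * ‖p - q‖) (v u : V) :
    g u ≤ g v + ⟪g' v, u - v⟫_ℝ + L / 2 * ‖u - v‖ ^ 2 := by
  set c : ℝ := ⟪g' v, u - v⟫_ℝ with hc
  set M : ℝ := L * ‖u - v‖ ^ 2 with hM
  set ψ : ℝ → ℝ := fun s => g (v + s • (u - v)) - s * c - M * s ^ 2 / 2 with hψ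
  have hψder : ∀ t : ℝ, HasDerivAt ψ (⟪g' (v + t • (u - v)), u - v⟫_ℝ - c - M * t) t := by
    intro t
    have h1 := hasDerivAt_line hg v u t
    have h2 : HasDerivAt (fun s : ℝ => s * c) c t := by simpa using (hasDerivAt_id t).mul_const c
    have h3 : HasDerivAt (fun s : ℝ => M * s ^ 2 / 2) (M * t) t := by
      have : HasDerivAt (fun s : ℝ => s ^ 2) (2 * t) t := by simpa using hasDerivAt_pow 2 t
      have := (this.const_mul M).div_const 2
      rw [show M * t = M * (2 * t) / 2 by ring]; exact this
    exact (h1.sub h2).sub h3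
  have hmono : AntitoneOn ψ (Set.Icc 0 1) := by
    apply antitoneOn_of_deriv_nonpos (convex_Icc 0 1)
    · exact (Differentiable.continuous (fun t => (hψder t).differentiableAt)).continuousOn
    · intro t ht
      exact ((hψder t).differentiableAt).differentiableWithinAt
    · intro t ht
      rw [interior_Icc] at ht
      rw [(hψder t).deriv]
      have key : ⟪g' (v + t • (u - v)) - g' v, u - v⟫_ℝ ≤ M * t := by
        calc ⟪g' (v + t • (u - v)) - g' v, u - v⟫_ℝ
            ≤ ‖g' (v + t • (u - v)) - g' v‖ * ‖u - v‖ := real_inner_le_norm _ _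
          _ ≤ (L * ‖(v + t • (u - v)) - v‖) * ‖u - v‖ := by
              apply mul_le_mul_of_nonneg_right (hlip _ _) (norm_nonneg _)
          _ = M * t := by
              simp only [add_sub_cancel_left, norm_smul, Real.norm_eq_abs,
                abs_of_pos ht.1]
              rw [hM]; ring
      have expand : ⟪g' (v + t • (u - v)), u - v⟫_ℝ - c = ⟪g' (v + t • (u - v)) - g' v, u - v⟫_ℝ := by
        rw [inner_sub_left]
      linarith [key, expand.symm ▸ key]
  have h01 : ψ 1 ≤ ψ 0 := hmono (Set.mem_Icc.2 ⟨le_refl 0, zero_le_one⟩)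
    (Set.mem_Icc.2 ⟨zero_le_one, le_refl 1⟩) zero_le_one
  have h0 : ψ 0 = g v := by simp [ψ]
  have h1 : ψ 1 = g u - c - M / 2 := by simp [ψ]
  rw [h0, h1] at h01
  rw [hc, hM] at h01
  nlinarith [h01]

/-- Bregman cocoercivity: for convex L-smooth functions,
`‖∇g u - ∇g v‖² ≤ 2L (g u - g v - ⟪∇g v, u - v⟫)`. -/
lemma grad_sq_le_bregman {g : V → ℝ} {g' : V → V} {L : ℝ} (hL : 0 < L)
    (hg : ∀ z, HasGradientAt g (g' z) z) (hc : ConvexOn ℝ Set.univ g)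
    (hlip : ∀ p q, ‖g' p - g' q‖ ≤ L * ‖p - q‖) (u v : V) :
    ‖g' u - g' v‖ ^ 2 ≤ 2 * L * (g u - g v - ⟪g' v, u - v⟫_ℝ) := by
  set φ : V → ℝ := fun z => g z - ⟪g' v, z⟫_ℝ with hφdef
  set φ' : V → V := fun z => g' z - g' v with hφ'def
  have hgφ : ∀ z, HasGradientAt φ (φ' z) z := fun z =>
    HasGradientAt.sub' (hg z) (hasGradientAt_const_inner (g' v) z)
  have hφconv : ConvexOn ℝ Set.univ φ := by
    constructor
    · exact convex_univ
    · intro p _ q _ a b ha hb hab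
      have := hc.2 (Set.mem_univ p) (Set.mem_univ q) ha hb hab
      simp only [φ, smul_eq_mul]
      rw [inner_add_right, inner_smul_right, inner_smul_right]
      simp only [smul_eq_mul] at this
      linarith
  have hφlip : ∀ p q, ‖φ' p - φ' q‖ ≤ L * ‖p - q‖ := by
    intro p q; simpa [φ'] using hlip p q
  set q : V := g' u - g' v with hq
  -- convexity: φ v is the minimum of φ (since φ' v = 0)
  have hmin : ∀ z, φ v ≤ φ z := by
    intro z
    have := convex_lower hgφ hφconv v z
    simpa [φ'] using this
  -- descent step from u
  have hdes := descent_lemma hL hgφ hφlip u (u - L⁻¹ • q)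
  have hLne : (L : ℝ) ≠ 0 := ne_of_gt hL
  have hsimp : φ (u - L⁻¹ • q) ≤ φ u - ‖q‖ ^ 2 / (2 * L) := by
    have h1 : ⟪φ' u, (u - L⁻¹ • q) - u⟫_ℝ = -(L⁻¹ * ‖q‖ ^ 2) := by
      simp only [sub_sub_cancel_left, inner_neg_right, real_inner_smul_right]
      rw [hφ'def]
      simp only [← hq, real_inner_self_eq_norm_sq]
    have h2 : ‖(u - L⁻¹ • q) - u‖ ^ 2 = L⁻¹ ^ 2 * ‖q‖ ^ 2 := by
      simp only [sub_sub_cancel_left, norm_neg, norm_smul, Real.norm_eq_abs,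
        abs_of_pos (inv_pos.2 hL), mul_pow]
    rw [h1, h2] at hdes
    calc φ (u - L⁻¹ • q) ≤ φ u + -(L⁻¹ * ‖q‖ ^ 2) + L / 2 * (L⁻¹ ^ 2 * ‖q‖ ^ 2) := hdes
      _ = φ u - ‖q‖ ^ 2 / (2 * L) := by field_simp; ring
  have hchain : φ v ≤ φ u - ‖q‖ ^ 2 / (2 * L) := le_trans (hmin _) hsimp
  have hφdiff : φ u - φ v = g u - g v - ⟪g' v, u - v⟫_ℝ := by
    simp only [φ, inner_sub_right]; ring
  have : ‖q‖ ^ 2 / (2 * L) ≤ g u - g v - ⟪g' v, u - v⟫_ℝ := by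
    rw [← hφdiff]; linarith
  calc ‖q‖ ^ 2 = 2 * L * (‖q‖ ^ 2 / (2 * L)) := by field_simp
    _ ≤ 2 * L * (g u - g v - ⟪g' v, u - v⟫_ℝ) := by
        apply mul_le_mul_of_nonneg_left this (by positivity)

section Comb
variable {W : Type*} [NormedAddCommGroup W] [InnerProductSpace ℝ W]

/-- cardinality of the complement of a point -/
lemma card_ne_point {κ : Type*} [Fintype κ] [DecidableEq κ] (k : κ) :
    Fintype.card { j // j ≠ k } = Fintype.card κ - 1 := by
  have := Fintype.card_subtype_compl (fun j : κ => j = k)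
  simp only [Fintype.card_subtype_eq] at this
  convert this using 2

/-- marginalizing out all coordinates but one -/
lemma marg1 {κ : Type*} [Fintype κ] [DecidableEq κ] {m : ℕ} (F : Fin m → ℝ) (k : κ) :
    ∑ h : κ → Fin m, F (h k) = (m : ℝ) ^ (Fintype.card κ - 1) * ∑ j, F j := by
  classical
  rw [← Equiv.sum_comp (Equiv.funSplitAt k (Fin m)).symm (fun h => F (h k))]
  have happ : ∀ p : Fin m × ({ j // j ≠ k } → Fin m),
      ((Equiv.funSplitAt k (Fin m)).symm p) k = p.1 := by
    intro p
    simp [Equiv.funSplitAt, Equiv.piSplitAt]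
  rw [Fintype.sum_prod_type]
  simp only [happ]
  rw [Finset.sum_comm]
  simp only [Finset.sum_const, Finset.card_univ, nsmul_eq_mul]
  have hcard : Fintype.card ({ j // j ≠ k } → Fin m) = m ^ (Fintype.card κ - 1) := by
    rw [Fintype.card_fun]
    rw [Fintype.card_fin, card_ne_point]
  rw [hcard]
  push_cast
  rw [Finset.mul_sum]

/-- marginalizing out all coordinates but two -/
lemma marg2 {κ : Type*} [Fintype κ] [DecidableEq κ] {m : ℕ} (F : Fin m → Fin m → ℝ)
    {k k' : κ} (hkk : k' ≠ k) :
    ∑ h : κ → Fin m, F (h k) (h k')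
      = (m : ℝ) ^ (Fintype.card κ - 2) * ∑ j, ∑ j', F j j' := by
  classical
  rw [← Equiv.sum_comp (Equiv.funSplitAt k (Fin m)).symm (fun h => F (h k) (h k'))]
  have happ : ∀ p : Fin m × ({ j // j ≠ k } → Fin m),
      ((Equiv.funSplitAt k (Fin m)).symm p) k = p.1 := by
    intro p; simp [Equiv.funSplitAt, Equiv.piSplitAt]
  have happ' : ∀ p : Fin m × ({ j // j ≠ k } → Fin m),
      ((Equiv.funSplitAt k (Fin m)).symm p) k' = p.2 ⟨k', hkk⟩ := by
    intro p; simp [Equiv.funSplitAt, Equiv.piSplitAt, hkk]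
  rw [Fintype.sum_prod_type]
  simp only [happ, happ']
  have hin : ∀ y : Fin m, ∑ g : { j // j ≠ k } → Fin m, F y (g ⟨k', hkk⟩)
      = (m : ℝ) ^ (Fintype.card { j // j ≠ k } - 1) * ∑ j', F y j' := by
    intro y; exact marg1 (fun j' => F y j') (⟨k', hkk⟩ : { j // j ≠ k })
  simp only [hin]
  have hcard : Fintype.card { j // j ≠ k } - 1 = Fintype.card κ - 2 := by
    rw [card_ne_point]; omega
  rw [hcard, ← Finset.mul_sum]

/-- Mean-zero independence expansion: if each `v k ·` sums to zero, the cross terms vanish. -/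
lemma expand_indep {κ : Type*} [Fintype κ] [DecidableEq κ] {m : ℕ}
    (v : κ → Fin m → W) (hv : ∀ k, ∑ j, v k j = 0) :
    ∑ h : κ → Fin m, ‖∑ k, v k (h k)‖ ^ 2
      = (m : ℝ) ^ (Fintype.card κ - 1) * ∑ k, ∑ j, ‖v k j‖ ^ 2 := by
  classical
  have hpt : ∀ h : κ → Fin m, ‖∑ k, v k (h k)‖ ^ 2
      = ∑ k, ∑ k', ⟪v k (h k), v k' (h k')⟫_ℝ := by
    intro h
    rw [← real_inner_self_eq_norm_sq, sum_inner]
    congr 1; ext k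
    rw [inner_sum]
  simp only [hpt]
  rw [Finset.sum_comm]
  have hswap : ∀ k : κ, ∑ h : κ → Fin m, ∑ k', ⟪v k (h k), v k' (h k')⟫_ℝ
      = ∑ k', ∑ h : κ → Fin m, ⟪v k (h k), v k' (h k')⟫_ℝ := fun k => Finset.sum_comm
  simp only [hswap]
  have hterm : ∀ k k' : κ, (∑ h : κ → Fin m, ⟪v k (h k), v k' (h k')⟫_ℝ)
      = if k' = k then (m : ℝ) ^ (Fintype.card κ - 1) * ∑ j, ‖v k j‖ ^ 2 else 0 := by
    intro k k'
    by_cases hkk : k' = k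
    · subst hkk
      rw [if_pos rfl]
      have := marg1 (fun j => ‖v k' j‖ ^ 2) k'
      rw [← this]
      congr 1; ext h
      rw [real_inner_self_eq_norm_sq]
    · rw [if_neg hkk]
      have := marg2 (fun j j' => ⟪v k j, v k' j'⟫_ℝ) hkk
      rw [this]
      have : ∑ j, ∑ j', ⟪v k j, v k' j'⟫_ℝ = ⟪∑ j, v k j, ∑ j', v k' j'⟫_ℝ := by
        rw [sum_inner]; congr 1; ext j; rw [inner_sum]
      rw [this, hv k, inner_zero_left, mul_zero]
  calc ∑ k, ∑ k', ∑ h : κ → Fin m, ⟪v k (h k), v k' (h k')⟫_ℝ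
      = ∑ k : κ, ((m : ℝ) ^ (Fintype.card κ - 1) * ∑ j, ‖v k j‖ ^ 2) := by
        apply Finset.sum_congr rfl
        intro k _
        simp only [hterm]
        rw [Finset.sum_ite_eq' Finset.univ k
          (fun _ => (m : ℝ) ^ (Fintype.card κ - 1) * ∑ j, ‖v k j‖ ^ 2)]
        simp
    _ = (m : ℝ) ^ (Fintype.card κ - 1) * ∑ k, ∑ j, ‖v k j‖ ^ 2 := by
        rw [Finset.mul_sum]

/-- variance is at most the second moment (about any point, here 0) -/
lemma var_le_sq {m : ℕ} (c : Fin m → W) (cbar : W) (hc : ∑ j, c j = (m : ℝ) • cbar) :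
    ∑ j, ‖cbar - c j‖ ^ 2 ≤ ∑ j, ‖c j‖ ^ 2 := by
  have hexp : ∀ j, ‖cbar - c j‖ ^ 2 = ‖cbar‖ ^ 2 - 2 * ⟪cbar, c j⟫_ℝ + ‖c j‖ ^ 2 := by
    intro j
    rw [norm_sub_sq_real]
  simp only [hexp]
  rw [Finset.sum_add_distrib, Finset.sum_sub_distrib, ← Finset.mul_sum, ← inner_sum, hc,
    real_inner_smul_right, real_inner_self_eq_norm_sq]
  simp only [Finset.sum_const, Finset.card_univ, Fintype.card_fin, nsmul_eq_mul]
  nlinarith [sq_nonneg ‖cbar‖, sq_nonneg ((m : ℝ) * ‖cbar‖), mul_self_nonneg ((m:ℝ) * ‖cbar‖^2)]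

end Comb

end Aux

/-- The SVRG gradient estimator `g(x, w, J) = (1/b) ∑_t (∇f_{J t}(x) - ∇f_{J t}(w)) + ∇f(w)`,
where `Favg` plays the role of the full objective `f = (1/m) ∑_j f_j`. -/
noncomputable def gEst {d m b : ℕ} (f : Fin m → EuclideanSpace ℝ (Fin d) → ℝ)
    (Favg : EuclideanSpace ℝ (Fin d) → ℝ)
    (x w : EuclideanSpace ℝ (Fin d)) (J : Fin b → Fin m) : EuclideanSpace ℝ (Fin d) :=
  (b : ℝ)⁻¹ • ∑ t : Fin b, (gradient (f (J t)) x - gradient (f (J t)) w)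
    + gradient Favg w

set_option maxHeartbeats 1000000 in
/-- Second-moment bound for the average of the workers' SVRG estimators. -/
theorem averaged_svrg_second_moment_bound
    {d m b G : ℕ} (hm : 1 ≤ m) (hb : 1 ≤ b)
    {ι : Type*} [DecidableEq ι] (𝒢 : Finset ι) (hne : 𝒢.Nonempty) (hcard : 𝒢.card = G)
    -- Assumption 1
    (f : Fin m → EuclideanSpace ℝ (Fin d) → ℝ)
    (Favg : EuclideanSpace ℝ (Fin d) → ℝ)
    (hFavg : ∀ x, Favg x = (m : ℝ)⁻¹ * ∑ j : Fin m, f j x)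
    (L μc : ℝ) (hL : 0 < L) (hμ : 0 < μc)
    (hdiff : ∀ j, Differentiable ℝ (f j))
    (hconv : ∀ j, ConvexOn ℝ Set.univ (f j))
    (hsmooth : ∀ j (x y : EuclideanSpace ℝ (Fin d)),
      ‖gradient (f j) x - gradient (f j) y‖ ≤ L * ‖x - y‖)
    (hstrong : ∀ x y : EuclideanSpace ℝ (Fin d),
      Favg x + ⟪gradient Favg x, y - x⟫_ℝ + μc / 2 * ‖y - x‖ ^ 2 ≤ Favg y)
    (xstar : EuclideanSpace ℝ (Fin d))
    (hmin : ∀ y, Favg xstar ≤ Favg y)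
    -- current point and reference points
    (x : EuclideanSpace ℝ (Fin d)) (w : ι → EuclideanSpace ℝ (Fin d)) :
    ((m : ℝ) ^ (b * G))⁻¹ *
        ∑ Jf : ↥𝒢 → Fin b → Fin m,
          ‖(G : ℝ)⁻¹ • ∑ i ∈ 𝒢.attach, gEst f Favg x (w i.1) (Jf i)‖ ^ 2
      ≤ 4 * L * (Favg x - Favg xstar)
        + 2 * (((G : ℝ) * (m : ℝ))⁻¹ * ∑ i ∈ 𝒢, ∑ j : Fin m,
            ‖gradient (f j) (w i) - gradient (f j) xstar‖ ^ 2) := by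
  classical
  have hm0 : (0:ℝ) < m := by exact_mod_cast hm
  have hb0 : (0:ℝ) < b := by exact_mod_cast hb
  have hG1 : 1 ≤ G := by rw [← hcard]; exact Finset.card_pos.2 hne
  have hG0 : (0:ℝ) < G := by exact_mod_cast hG1
  -- gradients of the f j
  have hgf : ∀ j (z : EuclideanSpace ℝ (Fin d)), HasGradientAt (f j) (gradient (f j) z) z :=
    fun j z => ((hdiff j) z).hasGradientAt
  -- gradient of Favg
  set gF : EuclideanSpace ℝ (Fin d) → EuclideanSpace ℝ (Fin d) := fun z => (m : ℝ)⁻¹ • ∑ j, gradient (f j) z with hgFdef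
  have hGF : ∀ z : EuclideanSpace ℝ (Fin d), HasGradientAt Favg (gF z) z := by
    intro z
    have hFeq : Favg = fun y => (m : ℝ)⁻¹ * ∑ j, f j y := funext hFavg
    rw [hFeq, hasGradientAt_iff_hasFDerivAt]
    have hsum : HasFDerivAt (fun y : EuclideanSpace ℝ (Fin d) => ∑ j, f j y)
        (∑ j, InnerProductSpace.toDual ℝ (EuclideanSpace ℝ (Fin d)) (gradient (f j) z)) z := by
      apply HasFDerivAt.fun_sum
      intro j _
      have := hgf j z
      rwa [hasGradientAt_iff_hasFDerivAt] at this
    have := hsum.const_mul ((m : ℝ)⁻¹)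
    refine this.congr_fderiv ?_
    rw [hgFdef]
    simp only [map_smul, map_sum]
  have hgradFavg : ∀ z : EuclideanSpace ℝ (Fin d), gradient Favg z = gF z := fun z => (hGF z).gradient
  -- Lipschitz property of gF
  have hGlip : ∀ p q : EuclideanSpace ℝ (Fin d), ‖gF p - gF q‖ ≤ L * ‖p - q‖ := by
    intro p q
    have h1 : gF p - gF q = (m:ℝ)⁻¹ • ∑ j, (gradient (f j) p - gradient (f j) q) := by
      rw [hgFdef]; simp only [Finset.sum_sub_distrib, smul_sub]
    rw [h1, norm_smul]
    have h2 : ‖∑ j, (gradient (f j) p - gradient (f j) q)‖ ≤ (m : ℝ) * (L * ‖p - q‖) := by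
      calc ‖∑ j, (gradient (f j) p - gradient (f j) q)‖
          ≤ ∑ j : Fin m, ‖gradient (f j) p - gradient (f j) q‖ := norm_sum_le _ _
        _ ≤ ∑ _j : Fin m, L * ‖p - q‖ := Finset.sum_le_sum fun j _ => hsmooth j p q
        _ = (m : ℝ) * (L * ‖p - q‖) := by
            rw [Finset.sum_const, Finset.card_univ, Fintype.card_fin, nsmul_eq_mul]
    calc ‖(m:ℝ)⁻¹‖ * ‖∑ j, (gradient (f j) p - gradient (f j) q)‖
        ≤ ‖(m:ℝ)⁻¹‖ * ((m : ℝ) * (L * ‖p - q‖)) := by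
          apply mul_le_mul_of_nonneg_left h2 (norm_nonneg _)
      _ = L * ‖p - q‖ := by
          rw [Real.norm_eq_abs, abs_of_pos (inv_pos.2 hm0)]
          field_simp
  -- the gradient vanishes at the minimizer
  have hgFstar : gF xstar = 0 := by
    set gs : EuclideanSpace ℝ (Fin d) := gF xstar with hgs
    have hdes := descent_lemma hL hGF hGlip xstar (xstar - L⁻¹ • gs)
    have h1 : ⟪gF xstar, (xstar - L⁻¹ • gs) - xstar⟫_ℝ = -(L⁻¹ * ‖gs‖ ^ 2) := by
      simp only [sub_sub_cancel_left, inner_neg_right, real_inner_smul_right, ← hgs,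
        real_inner_self_eq_norm_sq]
    have h2 : ‖(xstar - L⁻¹ • gs) - xstar‖ ^ 2 = L⁻¹ ^ 2 * ‖gs‖ ^ 2 := by
      simp only [sub_sub_cancel_left, norm_neg, norm_smul, Real.norm_eq_abs,
        abs_of_pos (inv_pos.2 hL), mul_pow]
    have he : L / 2 * (L⁻¹ ^ 2 * ‖gs‖ ^ 2) = L⁻¹ * ‖gs‖ ^ 2 / 2 := by
      field_simp
    rw [h1, h2, he] at hdes
    have h3 := hmin (xstar - L⁻¹ • gs)
    have h4 : L⁻¹ * ‖gs‖ ^ 2 ≤ 0 := by linarith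
    have h4b : 0 ≤ L⁻¹ * ‖gs‖ ^ 2 := mul_nonneg (inv_pos.2 hL).le (sq_nonneg _)
    have h5 : ‖gs‖ ^ 2 = 0 := by
      rcases mul_eq_zero.1 (le_antisymm h4 h4b) with h | h
      · exact absurd h (ne_of_gt (inv_pos.2 hL))
      · exact h
    exact norm_eq_zero.1 (pow_eq_zero_iff (by norm_num)|>.1 h5)
  have hsumgrad : ∀ z : EuclideanSpace ℝ (Fin d), ∑ j, gradient (f j) z = (m : ℝ) • gF z := by
    intro z
    rw [hgFdef]
    rw [smul_smul]
    rw [mul_inv_cancel₀ (ne_of_gt hm0), one_smul]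
  -- the key per-component bound
  set av : Fin m → EuclideanSpace ℝ (Fin d) := fun j => gradient (f j) x - gradient (f j) xstar with havdef
  set Sa : ℝ := ∑ j, ‖av j‖ ^ 2 with hSadef
  have hSa_nonneg : 0 ≤ Sa := Finset.sum_nonneg fun j _ => sq_nonneg _
  have ha : (m : ℝ)⁻¹ * Sa ≤ 2 * L * (Favg x - Favg xstar) := by
    have hj : ∀ j : Fin m, ‖av j‖ ^ 2
        ≤ 2 * L * (f j x - f j xstar - ⟪gradient (f j) xstar, x - xstar⟫_ℝ) := by
      intro j
      exact grad_sq_le_bregman hL (hgf j) (hconv j) (hsmooth j) x xstar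
    have hsumj : Sa ≤ 2 * L * ((∑ j, f j x) - (∑ j, f j xstar)
        - ⟪∑ j, gradient (f j) xstar, x - xstar⟫_ℝ) := by
      rw [hSadef]
      calc ∑ j, ‖av j‖ ^ 2
          ≤ ∑ j, 2 * L * (f j x - f j xstar - ⟪gradient (f j) xstar, x - xstar⟫_ℝ) :=
            Finset.sum_le_sum fun j _ => hj j
        _ = 2 * L * ((∑ j, f j x) - (∑ j, f j xstar)
            - ⟪∑ j, gradient (f j) xstar, x - xstar⟫_ℝ) := by
            rw [← Finset.mul_sum, sum_inner]
            congr 1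
            rw [Finset.sum_sub_distrib, Finset.sum_sub_distrib]
    rw [hsumgrad xstar, hgFstar, smul_zero, inner_zero_left, sub_zero] at hsumj
    have hfx : (∑ j, f j x) = (m:ℝ) * Favg x := by rw [hFavg x]; field_simp
    have hfxs : (∑ j, f j xstar) = (m:ℝ) * Favg xstar := by rw [hFavg xstar]; field_simp
    rw [hfx, hfxs] at hsumj
    calc (m : ℝ)⁻¹ * Sa ≤ (m:ℝ)⁻¹ * (2 * L * ((m:ℝ) * Favg x - (m:ℝ) * Favg xstar)) := by
          apply mul_le_mul_of_nonneg_left hsumj (le_of_lt (inv_pos.2 hm0))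
      _ = 2 * L * (Favg x - Favg xstar) := by field_simp
  -- per-worker vectors
  set cv : ↥𝒢 → Fin m → EuclideanSpace ℝ (Fin d) :=
    fun i j => gradient (f j) (w i.1) - gradient (f j) xstar with hcvdef
  set uv : ↥𝒢 → Fin m → EuclideanSpace ℝ (Fin d) :=
    fun i j => gF (w i.1) - cv i j with huvdef
  have hcsum : ∀ i : ↥𝒢, ∑ j, cv i j = (m:ℝ) • gF (w i.1) := by
    intro i
    simp only [hcvdef]
    rw [Finset.sum_sub_distrib, hsumgrad, hsumgrad, hgFstar, smul_zero, sub_zero]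
  have hu0 : ∀ i : ↥𝒢, ∑ j, uv i j = 0 := by
    intro i
    simp only [huvdef]
    rw [Finset.sum_sub_distrib, hcsum, Finset.sum_const, Finset.card_univ, Fintype.card_fin,
      ← Nat.cast_smul_eq_nsmul ℝ, sub_self]
  have hGb : (0:ℝ) < (G:ℝ) * b := mul_pos hG0 hb0
  -- per-worker decomposition of the estimator
  have hper : ∀ (i : ↥𝒢) (J : Fin b → Fin m),
      gEst f Favg x (w i.1) J = (b:ℝ)⁻¹ • ∑ t, (av (J t) + uv i (J t)) := by
    intro i J
    have hpt : ∀ t : Fin b, av (J t) + uv i (J t)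
        = (gradient (f (J t)) x - gradient (f (J t)) (w i.1)) + gF (w i.1) := by
      intro t
      simp only [havdef, huvdef, hcvdef]
      abel
    have hsum' : ∑ t : Fin b, (av (J t) + uv i (J t))
        = (∑ t : Fin b, (gradient (f (J t)) x - gradient (f (J t)) (w i.1)))
          + (b:ℝ) • gF (w i.1) := by
      simp only [hpt]
      rw [Finset.sum_add_distrib, Finset.sum_const, Finset.card_univ, Fintype.card_fin,
        ← Nat.cast_smul_eq_nsmul ℝ]
    rw [hsum', smul_add, smul_smul, inv_mul_cancel₀ (ne_of_gt hb0), one_smul]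
    simp only [gEst, hgradFavg]
  -- the two pieces
  set SA : ((↥𝒢 × Fin b) → Fin m) → EuclideanSpace ℝ (Fin d) :=
    fun h => ((G:ℝ)*b)⁻¹ • ∑ k : ↥𝒢 × Fin b, av (h k) with hSAdef
  set SC : ((↥𝒢 × Fin b) → Fin m) → EuclideanSpace ℝ (Fin d) :=
    fun h => ((G:ℝ)*b)⁻¹ • ∑ k : ↥𝒢 × Fin b, uv k.1 (h k) with hSCdef
  have hdecomp : ∀ h : (↥𝒢 × Fin b) → Fin m,
      (G:ℝ)⁻¹ • ∑ i ∈ 𝒢.attach, gEst f Favg x (w i.1) (fun t => h (i, t)) = SA h + SC h := by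
    intro h
    have h1 : ∑ i ∈ 𝒢.attach, gEst f Favg x (w i.1) (fun t => h (i, t))
        = ∑ i : ↥𝒢, (b:ℝ)⁻¹ • ∑ t, (av (h (i,t)) + uv i (h (i,t))) := by
      rw [← Finset.univ_eq_attach]
      exact Finset.sum_congr rfl fun i _ => hper i (fun t => h (i,t))
    rw [h1, ← Finset.smul_sum, smul_smul, ← mul_inv]
    have h2 : ∑ i : ↥𝒢, ∑ t : Fin b, (av (h (i,t)) + uv i (h (i,t)))
        = ∑ k : ↥𝒢 × Fin b, (av (h k) + uv k.1 (h k)) := by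
      rw [Fintype.sum_prod_type]
    rw [h2, Finset.sum_add_distrib, smul_add, hSAdef, hSCdef]
  -- rewrite the big sum over tuples via currying
  have hsum_eq : (∑ Jf : ↥𝒢 → Fin b → Fin m,
        ‖(G : ℝ)⁻¹ • ∑ i ∈ 𝒢.attach, gEst f Favg x (w i.1) (Jf i)‖ ^ 2)
      = ∑ h : (↥𝒢 × Fin b) → Fin m, ‖SA h + SC h‖ ^ 2 := by
    rw [← Equiv.sum_comp (Equiv.curry ↥𝒢 (Fin b) (Fin m))
      (fun Jf : ↥𝒢 → Fin b → Fin m =>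
        ‖(G : ℝ)⁻¹ • ∑ i ∈ 𝒢.attach, gEst f Favg x (w i.1) (Jf i)‖ ^ 2)]
    apply Finset.sum_congr rfl
    intro h _
    have : (Equiv.curry ↥𝒢 (Fin b) (Fin m)) h = fun i t => h (i, t) := rfl
    rw [this, hdecomp h]
  have hN : Fintype.card (↥𝒢 × Fin b) = G * b := by
    rw [Fintype.card_prod, Fintype.card_coe, Fintype.card_fin, hcard]
  -- bound for the A-part
  have hSA_bound : ∑ h : (↥𝒢 × Fin b) → Fin m, ‖SA h‖ ^ 2 ≤ (m:ℝ)^(G*b-1) * Sa := by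
    have hstep : ∀ h : (↥𝒢 × Fin b) → Fin m,
        ‖SA h‖ ^ 2 ≤ ((G:ℝ)*b)⁻¹ * ∑ k : ↥𝒢 × Fin b, ‖av (h k)‖ ^ 2 := by
      intro h
      have hcs : ‖∑ k : ↥𝒢 × Fin b, av (h k)‖ ^ 2
          ≤ ((G:ℝ)*b) * ∑ k : ↥𝒢 × Fin b, ‖av (h k)‖ ^ 2 := by
        calc ‖∑ k : ↥𝒢 × Fin b, av (h k)‖ ^ 2
            ≤ (∑ k : ↥𝒢 × Fin b, ‖av (h k)‖) ^ 2 :=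
              pow_le_pow_left₀ (norm_nonneg _) (norm_sum_le _ _) 2
          _ ≤ (Finset.univ.card : ℝ) * ∑ k : ↥𝒢 × Fin b, ‖av (h k)‖ ^ 2 := by
              exact_mod_cast sq_sum_le_card_mul_sum_sq (s := Finset.univ)
                (f := fun k : ↥𝒢 × Fin b => ‖av (h k)‖)
          _ = ((G:ℝ)*b) * ∑ k : ↥𝒢 × Fin b, ‖av (h k)‖ ^ 2 := by
              rw [Finset.card_univ, hN]; push_cast; ring
      simp only [hSAdef]
      rw [norm_smul, mul_pow, Real.norm_eq_abs, abs_of_pos (inv_pos.2 hGb)]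
      calc (((G:ℝ)*b)⁻¹)^2 * ‖∑ k : ↥𝒢 × Fin b, av (h k)‖ ^ 2
          ≤ (((G:ℝ)*b)⁻¹)^2 * (((G:ℝ)*b) * ∑ k : ↥𝒢 × Fin b, ‖av (h k)‖ ^ 2) :=
            mul_le_mul_of_nonneg_left hcs (by positivity)
        _ = ((G:ℝ)*b)⁻¹ * ∑ k : ↥𝒢 × Fin b, ‖av (h k)‖ ^ 2 := by
            field_simp
    calc ∑ h : (↥𝒢 × Fin b) → Fin m, ‖SA h‖ ^ 2
        ≤ ∑ h : (↥𝒢 × Fin b) → Fin m, ((G:ℝ)*b)⁻¹ * ∑ k : ↥𝒢 × Fin b, ‖av (h k)‖ ^ 2 :=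
          Finset.sum_le_sum fun h _ => hstep h
      _ = ((G:ℝ)*b)⁻¹ * ∑ h : (↥𝒢 × Fin b) → Fin m, ∑ k : ↥𝒢 × Fin b, ‖av (h k)‖ ^ 2 := by
          rw [← Finset.mul_sum]
      _ = ((G:ℝ)*b)⁻¹ * ∑ k : ↥𝒢 × Fin b, ∑ h : (↥𝒢 × Fin b) → Fin m, ‖av (h k)‖ ^ 2 := by
          rw [Finset.sum_comm]
      _ = ((G:ℝ)*b)⁻¹ * ∑ _k : ↥𝒢 × Fin b, ((m:ℝ)^(G*b-1) * Sa) := by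
          congr 1
          apply Finset.sum_congr rfl
          intro k _
          rw [marg1 (fun j => ‖av j‖ ^ 2) k, hN, hSadef]
      _ = (m:ℝ)^(G*b-1) * Sa := by
          rw [Finset.sum_const, Finset.card_univ, hN, nsmul_eq_mul]
          push_cast
          field_simp
  -- exact value for the C-part
  have hSC_eq : ∑ h : (↥𝒢 × Fin b) → Fin m, ‖SC h‖ ^ 2
      = (((G:ℝ)*b)⁻¹)^2 * ((m:ℝ)^(G*b-1)
          * ∑ k : ↥𝒢 × Fin b, ∑ j, ‖uv k.1 j‖ ^ 2) := by
    have hpt : ∀ h : (↥𝒢 × Fin b) → Fin m,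
        ‖SC h‖ ^ 2 = (((G:ℝ)*b)⁻¹)^2 * ‖∑ k : ↥𝒢 × Fin b, uv k.1 (h k)‖ ^ 2 := by
      intro h
      simp only [hSCdef]
      rw [norm_smul, mul_pow, Real.norm_eq_abs, abs_of_pos (inv_pos.2 hGb)]
    simp only [hpt]
    rw [← Finset.mul_sum]
    congr 1
    have := expand_indep (fun (k : ↥𝒢 × Fin b) (j : Fin m) => uv k.1 j) (fun k => hu0 k.1)
    rw [this, hN]
  -- the C-part second moment
  set Sc : ℝ := ∑ i ∈ 𝒢, ∑ j : Fin m,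
      ‖gradient (f j) (w i) - gradient (f j) xstar‖ ^ 2 with hScdef
  have hSc_nonneg : 0 ≤ Sc :=
    Finset.sum_nonneg fun i _ => Finset.sum_nonneg fun j _ => sq_nonneg _
  have hU : ∑ k : ↥𝒢 × Fin b, ∑ j, ‖uv k.1 j‖ ^ 2 ≤ (b:ℝ) * Sc := by
    have hvar : ∀ i : ↥𝒢, ∑ j, ‖uv i j‖ ^ 2 ≤ ∑ j, ‖cv i j‖ ^ 2 := by
      intro i
      have := var_le_sq (cv i) (gF (w i.1)) (hcsum i)
      simpa [huvdef] using this
    have hflat : ∑ i : ↥𝒢, ∑ j, ‖cv i j‖ ^ 2 = Sc := by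
      rw [hScdef, Finset.univ_eq_attach, ← Finset.sum_attach 𝒢
        (fun i => ∑ j : Fin m, ‖gradient (f j) (w i) - gradient (f j) xstar‖ ^ 2)]
    calc ∑ k : ↥𝒢 × Fin b, ∑ j, ‖uv k.1 j‖ ^ 2
        = ∑ i : ↥𝒢, ∑ _t : Fin b, ∑ j, ‖uv i j‖ ^ 2 := by rw [Fintype.sum_prod_type]
      _ = (b:ℝ) * ∑ i : ↥𝒢, ∑ j, ‖uv i j‖ ^ 2 := by
          rw [Finset.mul_sum]
          apply Finset.sum_congr rfl
          intro i _
          rw [Finset.sum_const, Finset.card_univ, Fintype.card_fin, nsmul_eq_mul]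
      _ ≤ (b:ℝ) * ∑ i : ↥𝒢, ∑ j, ‖cv i j‖ ^ 2 := by
          apply mul_le_mul_of_nonneg_left (Finset.sum_le_sum fun i _ => hvar i) hb0.le
      _ = (b:ℝ) * Sc := by rw [hflat]
  -- final numeric assembly
  have hIE : ((m:ℝ)^(b*G))⁻¹ * (m:ℝ)^(G*b-1) = (m:ℝ)⁻¹ := by
    have h1 : b * G = (G*b - 1) + 1 := by
      have : 1 ≤ G * b := Nat.one_le_iff_ne_zero.2 (Nat.mul_ne_zero (by omega) (by omega))
      rw [Nat.mul_comm b G]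
      omega
    rw [h1, pow_succ]
    field_simp
  rw [hsum_eq]
  have hquad : ∑ h : (↥𝒢 × Fin b) → Fin m, ‖SA h + SC h‖ ^ 2
      ≤ 2 * ∑ h : (↥𝒢 × Fin b) → Fin m, ‖SA h‖ ^ 2
        + 2 * ∑ h : (↥𝒢 × Fin b) → Fin m, ‖SC h‖ ^ 2 := by
    have hptq : ∀ h : (↥𝒢 × Fin b) → Fin m,
        ‖SA h + SC h‖ ^ 2 ≤ 2 * ‖SA h‖ ^ 2 + 2 * ‖SC h‖ ^ 2 := by
      intro h
      have h1 := norm_add_le (SA h) (SC h)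
      have h2 : ‖SA h + SC h‖ ^ 2 ≤ (‖SA h‖ + ‖SC h‖) ^ 2 :=
        pow_le_pow_left₀ (norm_nonneg _) h1 2
      nlinarith [sq_nonneg (‖SA h‖ - ‖SC h‖)]
    calc ∑ h : (↥𝒢 × Fin b) → Fin m, ‖SA h + SC h‖ ^ 2
        ≤ ∑ h : (↥𝒢 × Fin b) → Fin m, (2 * ‖SA h‖ ^ 2 + 2 * ‖SC h‖ ^ 2) :=
          Finset.sum_le_sum fun h _ => hptq h
      _ = _ := by rw [Finset.sum_add_distrib, ← Finset.mul_sum, ← Finset.mul_sum]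
  have hSC_bound : ∑ h : (↥𝒢 × Fin b) → Fin m, ‖SC h‖ ^ 2
      ≤ (((G:ℝ)*b)⁻¹)^2 * ((m:ℝ)^(G*b-1) * ((b:ℝ) * Sc)) := by
    rw [hSC_eq]
    apply mul_le_mul_of_nonneg_left _ (by positivity)
    exact mul_le_mul_of_nonneg_left hU (by positivity)
  have hpos : (0:ℝ) < ((m:ℝ)^(b*G))⁻¹ := by positivity
  calc ((m:ℝ)^(b*G))⁻¹ * ∑ h : (↥𝒢 × Fin b) → Fin m, ‖SA h + SC h‖ ^ 2
      ≤ ((m:ℝ)^(b*G))⁻¹ * (2 * ((m:ℝ)^(G*b-1) * Sa)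
          + 2 * ((((G:ℝ)*b)⁻¹)^2 * ((m:ℝ)^(G*b-1) * ((b:ℝ) * Sc)))) := by
        apply mul_le_mul_of_nonneg_left _ hpos.le
        calc ∑ h : (↥𝒢 × Fin b) → Fin m, ‖SA h + SC h‖ ^ 2
            ≤ 2 * ∑ h : (↥𝒢 × Fin b) → Fin m, ‖SA h‖ ^ 2
              + 2 * ∑ h : (↥𝒢 × Fin b) → Fin m, ‖SC h‖ ^ 2 := hquad
          _ ≤ _ := add_le_add
              (mul_le_mul_of_nonneg_left hSA_bound (by norm_num))
              (mul_le_mul_of_nonneg_left hSC_bound (by norm_num))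
    _ = 2 * ((m:ℝ)⁻¹ * Sa)
        + 2 * ((((G:ℝ)*b)⁻¹)^2 * (b:ℝ) * ((m:ℝ)⁻¹ * Sc)) := by
        have expand : ((m:ℝ)^(b*G))⁻¹ * (2 * ((m:ℝ)^(G*b-1) * Sa)
            + 2 * ((((G:ℝ)*b)⁻¹)^2 * ((m:ℝ)^(G*b-1) * ((b:ℝ) * Sc))))
            = 2 * ((((m:ℝ)^(b*G))⁻¹ * (m:ℝ)^(G*b-1)) * Sa)
              + 2 * ((((G:ℝ)*b)⁻¹)^2 * (b:ℝ)
                  * ((((m:ℝ)^(b*G))⁻¹ * (m:ℝ)^(G*b-1)) * Sc)) := by ring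
        rw [expand, hIE]
    _ ≤ 4 * L * (Favg x - Favg xstar) + 2 * (((G:ℝ) * (m:ℝ))⁻¹ * Sc) := by
        apply add_le_add
        · rw [hSadef] at ha ⊢
          linarith
        · have hcoef : (((G:ℝ)*b)⁻¹)^2 * (b:ℝ) * (m:ℝ)⁻¹ ≤ ((G:ℝ) * m)⁻¹ := by
            have hb1 : (1:ℝ) ≤ b := by exact_mod_cast hb
            have hG1' : (1:ℝ) ≤ G := by exact_mod_cast hG1
            have h1 : (((G:ℝ)*b)⁻¹)^2 * (b:ℝ) * (m:ℝ)⁻¹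
                = ((G:ℝ)*m)⁻¹ * (((G:ℝ)*b)⁻¹) := by
              field_simp
            rw [h1]
            have h2 : ((G:ℝ)*b)⁻¹ ≤ 1 := inv_le_one_of_one_le₀ (by nlinarith)
            have h3 : (0:ℝ) < ((G:ℝ)*m)⁻¹ := by positivity
            nlinarith
          calc 2 * ((((G:ℝ)*b)⁻¹)^2 * (b:ℝ) * ((m:ℝ)⁻¹ * Sc))
              = 2 * (((((G:ℝ)*b)⁻¹)^2 * (b:ℝ) * (m:ℝ)⁻¹) * Sc) := by ring
            _ ≤ 2 * (((G:ℝ) * m)⁻¹ * Sc) := by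
                apply mul_le_mul_of_nonneg_left _ (by norm_num)
                exact mul_le_mul_of_nonneg_right hcoef hSc_nonneg
end

section
/- Let f_1,…,f_m : ℝ^d → ℝ be differentiable, f = (1/m)Σ_{j=1}^m f_j, and suppose that for every y ∈ ℝ^d, (1/m)Σ_{j=1}^m ‖∇f_j(y) − ∇f(y)‖² ≤ σ². Then for any x, w, w' ∈ ℝ^d and any batch size b ≥ 1, (1/m^{2b}) Σ_{J ∈ {1,…,m}^b} Σ_{J' ∈ {1,…,m}^b} ‖g(x, w, J) − g(x, w', J')‖² ≤ 8σ²/b. -/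
open Finset
open scoped BigOperators


open Finset

section Aux
variable {E : Type*} [NormedAddCommGroup E] [InnerProductSpace ℝ E]
set_option linter.unusedSectionVars false

lemma svrg_sum_comp_cons {m b : ℕ} {M : Type*} [AddCommMonoid M]
    (g : (Fin (b+1) → Fin m) → M) :
    ∑ J : Fin (b+1) → Fin m, g J
      = ∑ k : Fin m, ∑ J : Fin b → Fin m, g (Fin.cons k J) := by
  rw [← (Fin.consEquiv (fun _ : Fin (b+1) => Fin m)).sum_comp g]
  rw [Fintype.sum_prod_type]
  rfl

lemma svrg_cons_sum {m b : ℕ} (Y : Fin m → E) (k : Fin m) (J : Fin b → Fin m) :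
    ∑ t : Fin (b+1), Y ((Fin.cons k J : Fin (b+1) → Fin m) t)
      = Y k + ∑ t : Fin b, Y (J t) := by
  rw [Fin.sum_univ_succ]; simp

lemma svrg_sum_fun_smul {m : ℕ} (Y : Fin m → E) (b : ℕ) :
    (m:ℝ) • ∑ J : Fin b → Fin m, ∑ t : Fin b, Y (J t)
      = ((b:ℝ) * (m:ℝ)^b) • ∑ j, Y j := by
  induction b with
  | zero => simp
  | succ b ih =>
    rw [svrg_sum_comp_cons (fun J => ∑ t : Fin (b+1), Y (J t))]
    simp only [svrg_cons_sum]
    have step : ∑ k : Fin m, ∑ J : Fin b → Fin m, (Y k + ∑ t : Fin b, Y (J t))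
        = ((m:ℝ)^b) • (∑ k : Fin m, Y k)
          + (m:ℝ) • ∑ J : Fin b → Fin m, ∑ t : Fin b, Y (J t) := by
      have h1 : ∀ k : Fin m, ∑ J : Fin b → Fin m, (Y k + ∑ t : Fin b, Y (J t))
          = ((m:ℝ)^b) • Y k + ∑ J : Fin b → Fin m, ∑ t : Fin b, Y (J t) := by
        intro k
        rw [Finset.sum_add_distrib]
        congr 1
        rw [Finset.sum_const, Finset.card_univ, ← Nat.cast_smul_eq_nsmul ℝ]
        congr 1
        simp
      simp only [h1, Finset.sum_add_distrib, ← Finset.smul_sum]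
      congr 1
      rw [Finset.sum_const, Finset.card_univ, ← Nat.cast_smul_eq_nsmul ℝ]
      simp
    rw [step, smul_add, smul_smul, ih, smul_smul, ← add_smul]
    congr 1
    push_cast
    ring

lemma svrg_sum_norm_sq {m : ℕ} (X : Fin m → E) (hX : ∑ j, X j = 0) (b : ℕ) :
    (m:ℝ) * ∑ J : Fin b → Fin m, ‖∑ t : Fin b, X (J t)‖^2
      = (b:ℝ) * (m:ℝ)^b * ∑ j, ‖X j‖^2 := by
  induction b with
  | zero => simp
  | succ b ih =>
    rw [svrg_sum_comp_cons (fun J => ‖∑ t : Fin (b+1), X (J t)‖^2)]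
    simp only [svrg_cons_sum]
    have expand : ∀ (k : Fin m) (J : Fin b → Fin m),
        ‖X k + ∑ t : Fin b, X (J t)‖^2
          = ‖X k‖^2 + 2 * (inner ℝ (X k) (∑ t : Fin b, X (J t)) : ℝ)
              + ‖∑ t : Fin b, X (J t)‖^2 := fun k J => norm_add_sq_real _ _
    simp only [expand]
    have hA : ∑ k : Fin m, ∑ _J : Fin b → Fin m, ‖X k‖^2
        = (m:ℝ)^b * ∑ k, ‖X k‖^2 := by
      simp [Finset.sum_const, Finset.card_univ, nsmul_eq_mul, Finset.mul_sum]
    have hB : ∑ k : Fin m, ∑ J : Fin b → Fin m,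
          (2 * (inner ℝ (X k) (∑ t : Fin b, X (J t)) : ℝ)) = 0 := by
      have h1 : ∀ k : Fin m, ∑ J : Fin b → Fin m,
          (2 * (inner ℝ (X k) (∑ t : Fin b, X (J t)) : ℝ))
          = 2 * (inner ℝ (X k) (∑ J : Fin b → Fin m, ∑ t : Fin b, X (J t)) : ℝ) := by
        intro k
        rw [← Finset.mul_sum, ← inner_sum]
      simp only [h1, ← Finset.mul_sum, ← sum_inner, hX]
      simp
    have hC : ∑ _k : Fin m, ∑ J : Fin b → Fin m, ‖∑ t : Fin b, X (J t)‖^2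
        = (m:ℝ) * ∑ J : Fin b → Fin m, ‖∑ t : Fin b, X (J t)‖^2 := by
      simp [Finset.sum_const, Finset.card_univ, nsmul_eq_mul]
    simp only [Finset.sum_add_distrib]
    rw [hA, hB, hC, mul_add, mul_add, ih]
    push_cast
    ring

lemma svrg_main_core {m b : ℕ} (hm : 1 ≤ m) (hb : 1 ≤ b)
    (a a' : (Fin b → Fin m) → E) (μ : E) (X X' : Fin m → E)
    (hu : ∀ J, a J - μ = (b:ℝ)⁻¹ • ∑ t : Fin b, X (J t))
    (hv : ∀ J, a' J - μ = (b:ℝ)⁻¹ • ∑ t : Fin b, X' (J t))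
    (hX : ∑ j, X j = 0) (hX' : ∑ j, X' j = 0) :
    ((m:ℝ)^(2*b))⁻¹ * ∑ J : Fin b → Fin m, ∑ J' : Fin b → Fin m, ‖a J - a' J'‖^2
      = ((b:ℝ)⁻¹ * (m:ℝ)⁻¹) * (∑ j, ‖X j‖^2 + ∑ j, ‖X' j‖^2) := by
  have hm0 : (m:ℝ) ≠ 0 := Nat.cast_ne_zero.mpr (by omega)
  have hb0 : (b:ℝ) ≠ 0 := Nat.cast_ne_zero.mpr (by omega)
  -- the sums over tuples of the centered estimators vanish
  have hsumX : ∑ J : Fin b → Fin m, ∑ t : Fin b, X (J t) = 0 := by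
    have := svrg_sum_fun_smul X b
    rw [hX, smul_zero] at this
    exact (smul_eq_zero.mp this).resolve_left hm0
  have hsumX' : ∑ J : Fin b → Fin m, ∑ t : Fin b, X' (J t) = 0 := by
    have := svrg_sum_fun_smul X' b
    rw [hX', smul_zero] at this
    exact (smul_eq_zero.mp this).resolve_left hm0
  have hV0 : ∑ J : Fin b → Fin m, (a' J - μ) = 0 := by
    simp only [hv, ← Finset.smul_sum, hsumX', smul_zero]
  -- expand the double sum
  have expand : ∀ J J' : Fin b → Fin m, ‖a J - a' J'‖^2
      = ‖a J - μ‖^2 - 2 * (inner ℝ (a J - μ) (a' J' - μ) : ℝ) + ‖a' J' - μ‖^2 := by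
    intro J J'
    rw [show a J - a' J' = (a J - μ) - (a' J' - μ) by abel]
    exact norm_sub_sq_real _ _
  have hcard : ∀ (r : ℝ), ∑ _J : Fin b → Fin m, r = (m:ℝ)^b * r := by
    intro r
    simp [Finset.sum_const, Finset.card_univ, nsmul_eq_mul]
  have hdouble : ∑ J : Fin b → Fin m, ∑ J' : Fin b → Fin m, ‖a J - a' J'‖^2
      = (m:ℝ)^b * ((∑ J : Fin b → Fin m, ‖a J - μ‖^2)
          + (∑ J' : Fin b → Fin m, ‖a' J' - μ‖^2)) := by
    simp only [expand, Finset.sum_add_distrib, Finset.sum_sub_distrib]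
    have t1 : ∑ J : Fin b → Fin m, ∑ _J' : Fin b → Fin m, ‖a J - μ‖^2
        = (m:ℝ)^b * ∑ J : Fin b → Fin m, ‖a J - μ‖^2 := by
      simp only [hcard, ← Finset.mul_sum]
    have t2 : ∑ J : Fin b → Fin m, ∑ J' : Fin b → Fin m,
        (2 * (inner ℝ (a J - μ) (a' J' - μ) : ℝ)) = 0 := by
      have h1 : ∀ J : Fin b → Fin m, ∑ J' : Fin b → Fin m,
          (2 * (inner ℝ (a J - μ) (a' J' - μ) : ℝ))
          = 2 * (inner ℝ (a J - μ) (∑ J' : Fin b → Fin m, (a' J' - μ)) : ℝ) := by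
        intro J
        rw [← Finset.mul_sum, ← inner_sum]
      simp only [h1, hV0, inner_zero_right, mul_zero, Finset.sum_const_zero]
    have t3 : ∑ _J : Fin b → Fin m, ∑ J' : Fin b → Fin m, ‖a' J' - μ‖^2
        = (m:ℝ)^b * ∑ J' : Fin b → Fin m, ‖a' J' - μ‖^2 := hcard _
    rw [t1, t2, t3]
    ring
  -- variance identities
  have hSu : (m:ℝ) * ∑ J : Fin b → Fin m, ‖a J - μ‖^2
      = (b:ℝ)⁻¹ * (m:ℝ)^b * ∑ j, ‖X j‖^2 := by
    have h1 : ∀ J : Fin b → Fin m, ‖a J - μ‖^2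
        = (b:ℝ)⁻¹^2 * ‖∑ t : Fin b, X (J t)‖^2 := by
      intro J
      rw [hu J, norm_smul, mul_pow]
      congr 1
      rw [norm_inv]
      simp
    simp only [h1, ← Finset.mul_sum]
    rw [show (m:ℝ) * ((b:ℝ)⁻¹^2 * ∑ J : Fin b → Fin m, ‖∑ t : Fin b, X (J t)‖^2)
        = (b:ℝ)⁻¹^2 * ((m:ℝ) * ∑ J : Fin b → Fin m, ‖∑ t : Fin b, X (J t)‖^2) by ring]
    rw [svrg_sum_norm_sq X hX b]
    field_simp
  have hSv : (m:ℝ) * ∑ J : Fin b → Fin m, ‖a' J - μ‖^2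
      = (b:ℝ)⁻¹ * (m:ℝ)^b * ∑ j, ‖X' j‖^2 := by
    have h1 : ∀ J : Fin b → Fin m, ‖a' J - μ‖^2
        = (b:ℝ)⁻¹^2 * ‖∑ t : Fin b, X' (J t)‖^2 := by
      intro J
      rw [hv J, norm_smul, mul_pow]
      congr 1
      rw [norm_inv]
      simp
    simp only [h1, ← Finset.mul_sum]
    rw [show (m:ℝ) * ((b:ℝ)⁻¹^2 * ∑ J : Fin b → Fin m, ‖∑ t : Fin b, X' (J t)‖^2)
        = (b:ℝ)⁻¹^2 * ((m:ℝ) * ∑ J : Fin b → Fin m, ‖∑ t : Fin b, X' (J t)‖^2) by ring]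
    rw [svrg_sum_norm_sq X' hX' b]
    field_simp
  -- put together
  have hpow : ((m:ℝ)^(2*b)) = (m:ℝ)^b * (m:ℝ)^b := by
    rw [two_mul, pow_add]
  rw [hdouble, hpow]
  have hmb0 : (m:ℝ)^b ≠ 0 := pow_ne_zero _ hm0
  have hSu' : ∑ J : Fin b → Fin m, ‖a J - μ‖^2
      = (m:ℝ)⁻¹ * ((b:ℝ)⁻¹ * (m:ℝ)^b * ∑ j, ‖X j‖^2) := by
    rw [← hSu]; field_simp
  have hSv' : ∑ J : Fin b → Fin m, ‖a' J - μ‖^2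
      = (m:ℝ)⁻¹ * ((b:ℝ)⁻¹ * (m:ℝ)^b * ∑ j, ‖X' j‖^2) := by
    rw [← hSv]; field_simp
  rw [hSu', hSv']
  field_simp

lemma svrg_grad_avg {d m : ℕ} (f : Fin m → EuclideanSpace ℝ (Fin d) → ℝ)
    (Favg : EuclideanSpace ℝ (Fin d) → ℝ)
    (hFavg : ∀ x, Favg x = (m : ℝ)⁻¹ * ∑ j : Fin m, f j x)
    (hdiff : ∀ j, Differentiable ℝ (f j)) (y : EuclideanSpace ℝ (Fin d)) :
    gradient Favg y = (m : ℝ)⁻¹ • ∑ j : Fin m, gradient (f j) y := by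
  have hFD : ∀ j : Fin m, HasFDerivAt (f j)
      (InnerProductSpace.toDual ℝ _ (gradient (f j) y)) y :=
    fun j => ((hdiff j y).hasGradientAt).hasFDerivAt
  have hsum : HasFDerivAt (fun z => ∑ j : Fin m, f j z)
      (∑ j : Fin m, InnerProductSpace.toDual ℝ _ (gradient (f j) y)) y :=
    HasFDerivAt.fun_sum (fun j _ => hFD j)
  have hmul : HasFDerivAt Favg
      ((m:ℝ)⁻¹ • ∑ j : Fin m, InnerProductSpace.toDual ℝ _ (gradient (f j) y)) y := by
    have := hsum.const_smul (m:ℝ)⁻¹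
    refine this.congr_of_eventuallyEq ?_
    filter_upwards with z
    rw [hFavg z, Pi.smul_apply, smul_eq_mul]
  have h := hasFDerivAt_iff_hasGradientAt.mp hmul
  rw [h.gradient, map_smul, map_sum]
  simp
  rfl

/-- Pairwise-deviation bound for SVRG estimators under the bounded-variance assumption. -/
theorem svrg_pairwise_deviation_bounded_variance
    {d m b : ℕ} (hm : 1 ≤ m) (hb : 1 ≤ b)
    (f : Fin m → EuclideanSpace ℝ (Fin d) → ℝ)
    (Favg : EuclideanSpace ℝ (Fin d) → ℝ)
    (hFavg : ∀ x, Favg x = (m : ℝ)⁻¹ * ∑ j : Fin m, f j x)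
    (hdiff : ∀ j, Differentiable ℝ (f j))
    (σ : ℝ)
    (hvar : ∀ y : EuclideanSpace ℝ (Fin d),
      (m : ℝ)⁻¹ * ∑ j : Fin m, ‖gradient (f j) y - gradient Favg y‖ ^ 2 ≤ σ ^ 2)
    (x w w' : EuclideanSpace ℝ (Fin d)) :
    ((m : ℝ) ^ (2 * b))⁻¹ *
        ∑ J : Fin b → Fin m, ∑ J' : Fin b → Fin m,
          ‖gEst f Favg x w J - gEst f Favg x w' J'‖ ^ 2
      ≤ 8 * σ ^ 2 / (b : ℝ) := by
  have hm0 : (m:ℝ) ≠ 0 := Nat.cast_ne_zero.mpr (by omega)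
  have hb0 : (b:ℝ) ≠ 0 := Nat.cast_ne_zero.mpr (by omega)
  have hmpos : (0:ℝ) < m := by positivity
  have hbpos : (0:ℝ) < b := by positivity
  set μ : EuclideanSpace ℝ (Fin d) := gradient Favg x with hμ
  set X : Fin m → EuclideanSpace ℝ (Fin d) :=
    fun j => (gradient (f j) x - gradient (f j) w) - (μ - gradient Favg w) with hXdef
  set X' : Fin m → EuclideanSpace ℝ (Fin d) :=
    fun j => (gradient (f j) x - gradient (f j) w') - (μ - gradient Favg w') with hX'def
  -- sums of X, X' vanish
  have hXsum : ∀ (v : EuclideanSpace ℝ (Fin d)),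
      ∑ j : Fin m, ((gradient (f j) x - gradient (f j) v) - (μ - gradient Favg v)) = 0 := by
    intro v
    have hgx := svrg_grad_avg f Favg hFavg hdiff x
    have hgv := svrg_grad_avg f Favg hFavg hdiff v
    have hconst : ∑ _j : Fin m, (μ - gradient Favg v)
        = (m:ℝ) • (μ - gradient Favg v) := by
      rw [Finset.sum_const, Finset.card_univ, ← Nat.cast_smul_eq_nsmul ℝ]
      simp
    rw [Finset.sum_sub_distrib, Finset.sum_sub_distrib, hconst, hμ, hgx, hgv,
      smul_sub, smul_smul, smul_smul, mul_inv_cancel₀ hm0, one_smul, one_smul]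
    abel
  have hX : ∑ j, X j = 0 := hXsum w
  have hX' : ∑ j, X' j = 0 := hXsum w'
  -- centered estimators
  have hu : ∀ (v : EuclideanSpace ℝ (Fin d)) (J : Fin b → Fin m),
      gEst f Favg x v J - μ
        = (b:ℝ)⁻¹ • ∑ t : Fin b,
            ((gradient (f (J t)) x - gradient (f (J t)) v) - (μ - gradient Favg v)) := by
    intro v J
    have hconst : ∑ _t : Fin b, (μ - gradient Favg v)
        = (b:ℝ) • (μ - gradient Favg v) := by
      rw [Finset.sum_const, Finset.card_univ, ← Nat.cast_smul_eq_nsmul ℝ]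
      simp
    rw [Finset.sum_sub_distrib, hconst, smul_sub, smul_smul, inv_mul_cancel₀ hb0, one_smul]
    rw [gEst]
    abel
  have key := svrg_main_core hm hb (gEst f Favg x w) (gEst f Favg x w') μ X X'
    (fun J => hu w J) (fun J => hu w' J) hX hX'
  rw [key]
  -- bound the variance terms
  have hTbound : ∀ (v : EuclideanSpace ℝ (Fin d)),
      ∑ j : Fin m, ‖(gradient (f j) x - gradient (f j) v) - (μ - gradient Favg v)‖^2
        ≤ 4 * (m:ℝ) * σ^2 := by
    intro v
    have hpt : ∀ j : Fin m,
        ‖(gradient (f j) x - gradient (f j) v) - (μ - gradient Favg v)‖^2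
          ≤ 2 * ‖gradient (f j) x - μ‖^2 + 2 * ‖gradient (f j) v - gradient Favg v‖^2 := by
      intro j
      have heq : (gradient (f j) x - gradient (f j) v) - (μ - gradient Favg v)
          = (gradient (f j) x - μ) - (gradient (f j) v - gradient Favg v) := by abel
      rw [heq]
      have h1 := norm_sub_le (gradient (f j) x - μ) (gradient (f j) v - gradient Favg v)
      nlinarith [norm_nonneg ((gradient (f j) x - μ) - (gradient (f j) v - gradient Favg v)),
        norm_nonneg (gradient (f j) x - μ), norm_nonneg (gradient (f j) v - gradient Favg v),
        sq_nonneg (‖gradient (f j) x - μ‖ - ‖gradient (f j) v - gradient Favg v‖)]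
    calc ∑ j : Fin m, ‖(gradient (f j) x - gradient (f j) v) - (μ - gradient Favg v)‖^2
        ≤ ∑ j : Fin m, (2 * ‖gradient (f j) x - μ‖^2
            + 2 * ‖gradient (f j) v - gradient Favg v‖^2) :=
          Finset.sum_le_sum (fun j _ => hpt j)
      _ = 2 * (∑ j : Fin m, ‖gradient (f j) x - gradient Favg x‖^2)
            + 2 * (∑ j : Fin m, ‖gradient (f j) v - gradient Favg v‖^2) := by
          rw [Finset.sum_add_distrib, ← Finset.mul_sum, ← Finset.mul_sum, hμ]
      _ ≤ 2 * ((m:ℝ) * σ^2) + 2 * ((m:ℝ) * σ^2) := by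
          have h1 : ∑ j : Fin m, ‖gradient (f j) x - gradient Favg x‖^2 ≤ (m:ℝ) * σ^2 := by
            have := hvar x
            rw [inv_mul_le_iff₀ hmpos] at this
            linarith [this]
          have h2 : ∑ j : Fin m, ‖gradient (f j) v - gradient Favg v‖^2 ≤ (m:ℝ) * σ^2 := by
            have := hvar v
            rw [inv_mul_le_iff₀ hmpos] at this
            linarith [this]
          linarith
      _ = 4 * (m:ℝ) * σ^2 := by ring
  have hT : ∑ j, ‖X j‖^2 + ∑ j, ‖X' j‖^2 ≤ 8 * (m:ℝ) * σ^2 := by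
    have := hTbound w
    have := hTbound w'
    have h1 : ∑ j, ‖X j‖^2 ≤ 4 * (m:ℝ) * σ^2 := hTbound w
    have h2 : ∑ j, ‖X' j‖^2 ≤ 4 * (m:ℝ) * σ^2 := hTbound w'
    linarith
  calc ((b:ℝ)⁻¹ * (m:ℝ)⁻¹) * (∑ j, ‖X j‖^2 + ∑ j, ‖X' j‖^2)
      ≤ ((b:ℝ)⁻¹ * (m:ℝ)⁻¹) * (8 * (m:ℝ) * σ^2) := by
        apply mul_le_mul_of_nonneg_left hT
        positivity
    _ = 8 * σ^2 / (b:ℝ) := by field_simp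
end Aux
end

section
/- Under Assumption 1, for any x, w ∈ ℝ^d and any batch size b ≥ 1, the SVRG estimator satisfies (1/m^b) Σ_{J ∈ {1,…,m}^b} ‖g(x, w, J) − ∇f(x)‖² ≤ (4L/b)·(f(x) − f(x*)) + (2/(bm)) Σ_{j=1}^m ‖∇f_j(w) − ∇f_j(x*)‖². -/
open Finset
open scoped BigOperators InnerProductSpace

section Aux

variable {E : Type*} [NormedAddCommGroup E] [InnerProductSpace ℝ E] [CompleteSpace E]

lemma line_hasDerivAt' {f : E → ℝ} (hf : Differentiable ℝ f) (x v : E) (t : ℝ) :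
    HasDerivAt (fun s : ℝ => f (x + s • v)) ⟪gradient f (x + t • v), v⟫_ℝ t := by
  have h1 : HasDerivAt (fun s : ℝ => x + s • v) v t := by
    simpa using ((hasDerivAt_id t).smul_const v).const_add x
  have h2 := (hf (x + t • v)).hasGradientAt.hasFDerivAt
  have h3 := h2.comp_hasDerivAt t h1
  exact h3

lemma convex_first_order' {f : E → ℝ} (hf : Differentiable ℝ f)
    (hconv : ConvexOn ℝ Set.univ f) (x y : E) :
    f x + ⟪gradient f x, y - x⟫_ℝ ≤ f y := by
  set v := y - x with hv
  set φ : ℝ → ℝ := fun s => f (x + s • v) with hφ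
  have hφconv : ConvexOn ℝ Set.univ φ := by
    have := hconv.comp_affineMap (AffineMap.lineMap x y : ℝ →ᵃ[ℝ] E)
    have heq : (f ∘ (AffineMap.lineMap x y : ℝ →ᵃ[ℝ] E)) = φ := by
      funext s
      simp only [Function.comp_apply, AffineMap.lineMap_apply_module, φ, hv]
      congr 1
      module
    rw [heq] at this
    simpa using this
  have hder : HasDerivAt φ ⟪gradient f x, v⟫_ℝ 0 := by
    have := line_hasDerivAt' hf x v 0
    simpa using this
  have := hφconv.le_slope_of_hasDerivAt (Set.mem_univ 0) (Set.mem_univ 1) one_pos hder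
  rw [slope_def_field] at this
  have h0 : φ 0 = f x := by simp [φ]
  have h1 : φ 1 = f y := by simp [φ, hv]
  simp [h0, h1] at this
  have hgx : ⟪gradient f x, v⟫_ℝ = (fderiv ℝ f x) v := by simp
  linarith

lemma descent_lemma' {f : E → ℝ} (hf : Differentiable ℝ f) {L : ℝ} (hL : 0 < L)
    (hs : ∀ x y : E, ‖gradient f x - gradient f y‖ ≤ L * ‖x - y‖) (x y : E) :
    f y ≤ f x + ⟪gradient f x, y - x⟫_ℝ + L / 2 * ‖y - x‖ ^ 2 := by
  set v := y - x with hv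
  set ψ : ℝ → ℝ := fun s => f (x + s • v) - s * ⟪gradient f x, v⟫_ℝ - L / 2 * ‖v‖ ^ 2 * s ^ 2
    with hψ
  have hder : ∀ t : ℝ, HasDerivAt ψ
      (⟪gradient f (x + t • v), v⟫_ℝ - ⟪gradient f x, v⟫_ℝ - L * ‖v‖ ^ 2 * t) t := by
    intro t
    have h1 := line_hasDerivAt' hf x v t
    have h2 : HasDerivAt (fun s : ℝ => s * ⟪gradient f x, v⟫_ℝ) ⟪gradient f x, v⟫_ℝ t := by
      simpa using (hasDerivAt_id t).mul_const ⟪gradient f x, v⟫_ℝ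
    have h3 : HasDerivAt (fun s : ℝ => L / 2 * ‖v‖ ^ 2 * s ^ 2) (L * ‖v‖ ^ 2 * t) t := by
      have := (hasDerivAt_pow 2 t).const_mul (L / 2 * ‖v‖ ^ 2)
      refine this.congr_deriv ?_
      norm_num
      ring
    exact (h1.sub h2).sub h3
  have hanti : AntitoneOn ψ (Set.Icc (0:ℝ) 1) := by
    apply antitoneOn_of_deriv_nonpos (convex_Icc 0 1)
    · exact (fun t _ => ((hder t).continuousAt).continuousWithinAt)
    · intro t ht
      exact ((hder t).differentiableAt).differentiableWithinAt
    · intro t ht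
      rw [interior_Icc] at ht
      rw [(hder t).deriv]
      have hcs : ⟪gradient f (x + t • v) - gradient f x, v⟫_ℝ
          ≤ ‖gradient f (x + t • v) - gradient f x‖ * ‖v‖ := real_inner_le_norm _ _
      have hlip : ‖gradient f (x + t • v) - gradient f x‖ ≤ L * (t * ‖v‖) := by
        have := hs (x + t • v) x
        simpa [norm_smul, abs_of_pos ht.1, mul_assoc] using this
      have : ⟪gradient f (x + t • v), v⟫_ℝ - ⟪gradient f x, v⟫_ℝ ≤ L * ‖v‖ ^ 2 * t := by
        rw [← inner_sub_left]
        calc ⟪gradient f (x + t • v) - gradient f x, v⟫_ℝ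
            ≤ ‖gradient f (x + t • v) - gradient f x‖ * ‖v‖ := hcs
          _ ≤ L * (t * ‖v‖) * ‖v‖ := by
              apply mul_le_mul_of_nonneg_right hlip (norm_nonneg _)
          _ = L * ‖v‖ ^ 2 * t := by ring
      linarith
  have := hanti (Set.mem_Icc.2 ⟨le_refl 0, zero_le_one⟩) (Set.mem_Icc.2 ⟨zero_le_one, le_refl 1⟩)
    zero_le_one
  have h0 : ψ 0 = f x := by simp [ψ]
  have h1 : ψ 1 = f y - ⟪gradient f x, v⟫_ℝ - L / 2 * ‖v‖ ^ 2 := by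
    simp [ψ, hv]
  rw [h0, h1] at this
  linarith

lemma cocoercive' {f : E → ℝ} (hf : Differentiable ℝ f)
    (hconv : ConvexOn ℝ Set.univ f) {L : ℝ} (hL : 0 < L)
    (hs : ∀ x y : E, ‖gradient f x - gradient f y‖ ≤ L * ‖x - y‖) (x y : E) :
    ‖gradient f x - gradient f y‖ ^ 2
      ≤ 2 * L * (f x - f y - ⟪gradient f y, x - y⟫_ℝ) := by
  set g := gradient f x - gradient f y with hg
  set z := x - L⁻¹ • g with hz
  have h1 := descent_lemma' hf hL hs x z
  have h2 := convex_first_order' hf hconv y z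
  have hzx : z - x = -(L⁻¹ • g) := by rw [hz]; abel
  have hzy : z - y = (x - y) - L⁻¹ • g := by rw [hz]; abel
  have e1 : ⟪gradient f x, z - x⟫_ℝ = -(L⁻¹ * ⟪gradient f x, g⟫_ℝ) := by
    rw [hzx, inner_neg_right, real_inner_smul_right]
  have e2 : ‖z - x‖ ^ 2 = L⁻¹ ^ 2 * ‖g‖ ^ 2 := by
    rw [hzx, norm_neg, norm_smul, mul_pow]
    congr 1
    rw [Real.norm_eq_abs, abs_of_pos (inv_pos.2 hL)]
  have e3 : ⟪gradient f y, z - y⟫_ℝ = ⟪gradient f y, x - y⟫_ℝ - L⁻¹ * ⟪gradient f y, g⟫_ℝ := by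
    rw [hzy, inner_sub_right, real_inner_smul_right]
  have e4 : ⟪gradient f x, g⟫_ℝ - ⟪gradient f y, g⟫_ℝ = ‖g‖ ^ 2 := by
    rw [← inner_sub_left, ← hg, real_inner_self_eq_norm_sq]
  rw [e1, e2] at h1
  rw [e3] at h2
  have hLi : (0:ℝ) < L⁻¹ := inv_pos.2 hL
  have key : f y + ⟪gradient f y, x - y⟫_ℝ + L⁻¹ * ‖g‖ ^ 2 - L / 2 * (L⁻¹ ^ 2 * ‖g‖ ^ 2)
      ≤ f x := by nlinarith [h1, h2, e4]
  have hfin : L⁻¹ * ‖g‖ ^ 2 - L / 2 * (L⁻¹ ^ 2 * ‖g‖ ^ 2) = ‖g‖ ^ 2 / (2 * L) := by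
    field_simp
    ring
  have h5 : ‖g‖ ^ 2 / (2 * L) ≤ f x - f y - ⟪gradient f y, x - y⟫_ℝ := by linarith
  rw [div_le_iff₀ (by positivity : (0:ℝ) < 2 * L)] at h5
  nlinarith [h5]

end Aux

section Comb

variable {E : Type*} [NormedAddCommGroup E] [InnerProductSpace ℝ E]

lemma sum_sq_tuple' {m : ℕ} (Y : Fin m → E) (hY : ∑ j, Y j = 0) (b : ℕ) :
    ∑ J : Fin b → Fin m, ‖∑ t, Y (J t)‖ ^ 2
      = (b : ℝ) * (m : ℝ) ^ (b - 1) * ∑ j, ‖Y j‖ ^ 2 := by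
  induction b with
  | zero => simp
  | succ b ih =>
    rw [← Equiv.sum_comp (Fin.consEquiv (fun _ : Fin (b+1) => Fin m))
      (fun J : Fin (b+1) → Fin m => ‖∑ t, Y (J t)‖ ^ 2), Fintype.sum_prod_type]
    have hsplit : ∀ (j : Fin m) (J : Fin b → Fin m),
        (∑ t : Fin (b+1), Y ((Fin.consEquiv (fun _ => Fin m)) (j, J) t))
          = Y j + ∑ t : Fin b, Y (J t) := by
      intro j J
      rw [Fin.sum_univ_succ]
      simp [Fin.consEquiv]
    have hexp : ∀ (j : Fin m) (J : Fin b → Fin m),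
        ‖∑ t : Fin (b+1), Y ((Fin.consEquiv (fun _ => Fin m)) (j, J) t)‖ ^ 2
          = ‖Y j‖ ^ 2 + 2 * ⟪Y j, ∑ t : Fin b, Y (J t)⟫_ℝ + ‖∑ t : Fin b, Y (J t)‖ ^ 2 := by
      intro j J
      rw [hsplit j J, norm_add_sq_real]
    simp_rw [hexp]
    rw [Finset.sum_comm]
    have hrow : ∀ J : Fin b → Fin m,
        (∑ j : Fin m, (‖Y j‖ ^ 2 + 2 * ⟪Y j, ∑ t : Fin b, Y (J t)⟫_ℝ
            + ‖∑ t : Fin b, Y (J t)‖ ^ 2))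
          = (∑ j, ‖Y j‖ ^ 2) + (m : ℝ) * ‖∑ t : Fin b, Y (J t)‖ ^ 2 := by
      intro J
      rw [Finset.sum_add_distrib, Finset.sum_add_distrib]
      have hz : (∑ j : Fin m, 2 * ⟪Y j, ∑ t : Fin b, Y (J t)⟫_ℝ) = 0 := by
        rw [← Finset.mul_sum, ← sum_inner, hY]
        simp
      rw [hz]
      simp [Finset.sum_const, Finset.card_univ, nsmul_eq_mul]
    simp_rw [hrow]
    rw [Finset.sum_add_distrib, Finset.sum_const, ← Finset.mul_sum, ih]
    have hcard : (Finset.univ : Finset (Fin b → Fin m)).card = m ^ b := by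
      simp [Finset.card_univ]
    rw [hcard]
    have hm : (m : ℝ) * ((b : ℝ) * (m : ℝ) ^ (b - 1)) = (b : ℝ) * (m : ℝ) ^ b := by
      cases b with
      | zero => simp
      | succ k => rw [Nat.add_sub_cancel, pow_succ]; ring
    push_cast
    rw [← mul_assoc, hm]
    ring

end Comb

set_option maxHeartbeats 1000000 in
/-- Variance bound for the SVRG estimator under Assumption 1. -/
theorem svrg_variance_bound
    {d m b : ℕ} (hm : 1 ≤ m) (hb : 1 ≤ b)
    -- Assumption 1
    (f : Fin m → EuclideanSpace ℝ (Fin d) → ℝ)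
    (Favg : EuclideanSpace ℝ (Fin d) → ℝ)
    (hFavg : ∀ x, Favg x = (m : ℝ)⁻¹ * ∑ j : Fin m, f j x)
    (L μc : ℝ) (hL : 0 < L) (hμ : 0 < μc)
    (hdiff : ∀ j, Differentiable ℝ (f j))
    (hconv : ∀ j, ConvexOn ℝ Set.univ (f j))
    (hsmooth : ∀ j (x y : EuclideanSpace ℝ (Fin d)),
      ‖gradient (f j) x - gradient (f j) y‖ ≤ L * ‖x - y‖)
    (hstrong : ∀ x y : EuclideanSpace ℝ (Fin d),
      Favg x + ⟪gradient Favg x, y - x⟫_ℝ + μc / 2 * ‖y - x‖ ^ 2 ≤ Favg y)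
    (xstar : EuclideanSpace ℝ (Fin d))
    (hmin : ∀ y, Favg xstar ≤ Favg y)
    (x w : EuclideanSpace ℝ (Fin d)) :
    ((m : ℝ) ^ b)⁻¹ *
        ∑ J : Fin b → Fin m, ‖gEst f Favg x w J - gradient Favg x‖ ^ 2
      ≤ 4 * L / (b : ℝ) * (Favg x - Favg xstar)
        + 2 / ((b : ℝ) * (m : ℝ)) * ∑ j : Fin m,
            ‖gradient (f j) w - gradient (f j) xstar‖ ^ 2 := by
  classical
  have hmR : (0:ℝ) < (m : ℝ) := by exact_mod_cast Nat.lt_of_lt_of_le Nat.zero_lt_one hm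
  have hbR : (0:ℝ) < (b : ℝ) := by exact_mod_cast Nat.lt_of_lt_of_le Nat.zero_lt_one hb
  set G : Fin m → EuclideanSpace ℝ (Fin d) → EuclideanSpace ℝ (Fin d) := fun j => gradient (f j) with hG
  -- gradient of Favg
  have hgradF : ∀ z : EuclideanSpace ℝ (Fin d), HasGradientAt Favg ((m : ℝ)⁻¹ • ∑ j, G j z) z := by
    intro z
    have hsum : HasFDerivAt (fun y : EuclideanSpace ℝ (Fin d) => ∑ j : Fin m, f j y)
        (∑ j : Fin m, (InnerProductSpace.toDual ℝ (EuclideanSpace ℝ (Fin d))) (G j z)) z :=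
      HasFDerivAt.fun_sum (fun j _ => ((hdiff j) z).hasGradientAt.hasFDerivAt)
    have hmul := hsum.const_mul ((m : ℝ)⁻¹)
    have hFeq : Favg = fun y : EuclideanSpace ℝ (Fin d) => (m : ℝ)⁻¹ * ∑ j : Fin m, f j y := funext hFavg
    rw [← hFeq] at hmul
    have hdual : (InnerProductSpace.toDual ℝ (EuclideanSpace ℝ (Fin d))) ((m : ℝ)⁻¹ • ∑ j, G j z)
        = (m : ℝ)⁻¹ • ∑ j : Fin m, (InnerProductSpace.toDual ℝ (EuclideanSpace ℝ (Fin d))) (G j z) := by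
      rw [map_smul, map_sum]
    rw [hasGradientAt_iff_hasFDerivAt, hdual]
    exact hmul
  have hgradFeq : ∀ z : EuclideanSpace ℝ (Fin d), gradient Favg z = (m : ℝ)⁻¹ • ∑ j, G j z :=
    fun z => (hgradF z).gradient
  -- gradient at the minimizer vanishes
  have hstar0 : gradient Favg xstar = 0 := by
    have hloc : IsLocalMin Favg xstar := Filter.Eventually.of_forall hmin
    rw [gradient, hloc.fderiv_eq_zero, map_zero]
  have hsum0 : (∑ j, G j xstar) = 0 := by
    have := (hgradFeq xstar).symm.trans hstar0
    rcases smul_eq_zero.1 this with h | h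
    · exact absurd h (by positivity)
    · exact h
  -- per-component quantities
  set a : Fin m → EuclideanSpace ℝ (Fin d) := fun j => G j x - G j w with ha
  set A : EuclideanSpace ℝ (Fin d) := (m : ℝ)⁻¹ • ∑ j, a j with hA
  set Y : Fin m → EuclideanSpace ℝ (Fin d) := fun j => a j - A with hYdef
  have hsuma : (∑ j, a j) = (m : ℝ) • A := by
    rw [hA, smul_smul, mul_inv_cancel₀ (ne_of_gt hmR), one_smul]
  have hYsum : (∑ j, Y j) = 0 := by
    rw [hYdef]
    simp only [Finset.sum_sub_distrib, Finset.sum_const, Finset.card_univ, Fintype.card_fin]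
    rw [hsuma, ← Nat.cast_smul_eq_nsmul ℝ m A, sub_self]
  -- rewrite the estimator deviation
  have hAF : gradient Favg x - gradient Favg w = A := by
    rw [hgradFeq, hgradFeq, ← smul_sub, hA, ← Finset.sum_sub_distrib]
  have hgest : ∀ J : Fin b → Fin m,
      gEst f Favg x w J - gradient Favg x = (b : ℝ)⁻¹ • ∑ t, Y (J t) := by
    intro J
    have h1 : ∑ t : Fin b, Y (J t) = (∑ t : Fin b, a (J t)) - (b : ℝ) • A := by
      rw [hYdef]
      simp only [Finset.sum_sub_distrib, Finset.sum_const, Finset.card_univ, Fintype.card_fin]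
      rw [← Nat.cast_smul_eq_nsmul ℝ b A]
    rw [h1, smul_sub, smul_smul, inv_mul_cancel₀ (ne_of_gt hbR), one_smul]
    rw [gEst, ← hAF]
    abel
  -- the sum over batches
  have hsumJ : ∑ J : Fin b → Fin m, ‖gEst f Favg x w J - gradient Favg x‖ ^ 2
      = ((b : ℝ)⁻¹) ^ 2 * ((b : ℝ) * (m : ℝ) ^ (b - 1) * ∑ j, ‖Y j‖ ^ 2) := by
    rw [← sum_sq_tuple' Y hYsum b, Finset.mul_sum]
    refine Finset.sum_congr rfl fun J _ => ?_
    rw [hgest J, norm_smul, mul_pow, Real.norm_eq_abs, abs_of_pos (inv_pos.2 hbR)]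
  -- variance ≤ second moment
  have hvar : (∑ j, ‖Y j‖ ^ 2) ≤ ∑ j, ‖a j‖ ^ 2 := by
    have hexp : ∀ j, ‖Y j‖ ^ 2 = ‖a j‖ ^ 2 - 2 * ⟪a j, A⟫_ℝ + ‖A‖ ^ 2 := by
      intro j
      rw [hYdef]
      exact norm_sub_sq_real _ _
    have hinner : (∑ j, ⟪a j, A⟫_ℝ) = (m : ℝ) * ‖A‖ ^ 2 := by
      rw [← sum_inner, hsuma, real_inner_smul_left, real_inner_self_eq_norm_sq]
    calc (∑ j, ‖Y j‖ ^ 2)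
        = (∑ j, ‖a j‖ ^ 2) - 2 * ((m : ℝ) * ‖A‖ ^ 2) + (m : ℝ) * ‖A‖ ^ 2 := by
          simp_rw [hexp]
          rw [Finset.sum_add_distrib, Finset.sum_sub_distrib, ← Finset.mul_sum, hinner,
            Finset.sum_const, Finset.card_univ, Fintype.card_fin, nsmul_eq_mul]
      _ = (∑ j, ‖a j‖ ^ 2) - (m : ℝ) * ‖A‖ ^ 2 := by ring
      _ ≤ ∑ j, ‖a j‖ ^ 2 := by nlinarith [sq_nonneg ‖A‖, hmR]
  -- split each a j
  have hsplit : ∀ j, ‖a j‖ ^ 2 ≤ 2 * ‖G j x - G j xstar‖ ^ 2 + 2 * ‖G j w - G j xstar‖ ^ 2 := by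
    intro j
    have haj : a j = (G j x - G j xstar) - (G j w - G j xstar) := by rw [ha]; abel
    rw [haj]
    have h1 := norm_sub_le (G j x - G j xstar) (G j w - G j xstar)
    nlinarith [norm_nonneg (G j x - G j xstar), norm_nonneg (G j w - G j xstar),
      norm_nonneg ((G j x - G j xstar) - (G j w - G j xstar)),
      sq_nonneg (‖G j x - G j xstar‖ - ‖G j w - G j xstar‖)]
  -- cocoercivity bound
  have hco : ∀ j, ‖G j x - G j xstar‖ ^ 2
      ≤ 2 * L * (f j x - f j xstar - ⟪G j xstar, x - xstar⟫_ℝ) :=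
    fun j => cocoercive' (hdiff j) (hconv j) hL (hsmooth j) x xstar
  have hsumf : ∀ z : EuclideanSpace ℝ (Fin d), (∑ j, f j z) = (m : ℝ) * Favg z := by
    intro z
    rw [hFavg z, ← mul_assoc, mul_inv_cancel₀ (ne_of_gt hmR), one_mul]
  have hkey1 : (∑ j, ‖G j x - G j xstar‖ ^ 2)
      ≤ 2 * L * (m : ℝ) * (Favg x - Favg xstar) := by
    calc (∑ j, ‖G j x - G j xstar‖ ^ 2)
        ≤ ∑ j, 2 * L * (f j x - f j xstar - ⟪G j xstar, x - xstar⟫_ℝ) :=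
          Finset.sum_le_sum fun j _ => hco j
      _ = 2 * L * ((∑ j, f j x) - (∑ j, f j xstar) - ⟪∑ j, G j xstar, x - xstar⟫_ℝ) := by
          rw [← Finset.mul_sum]
          congr 1
          rw [sum_inner]
          rw [Finset.sum_sub_distrib, Finset.sum_sub_distrib]
      _ = 2 * L * (m : ℝ) * (Favg x - Favg xstar) := by
          rw [hsum0, hsumf, hsumf]
          simp only [inner_zero_left]
          ring
  -- put everything together
  set S1 : ℝ := ∑ j, ‖Y j‖ ^ 2 with hS1
  set S3 : ℝ := ∑ j, ‖G j w - G j xstar‖ ^ 2 with hS3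
  have hS1bound : S1 ≤ 4 * L * (m : ℝ) * (Favg x - Favg xstar) + 2 * S3 := by
    have h2 : S1 ≤ ∑ j, ‖a j‖ ^ 2 := hvar
    have h3 : (∑ j, ‖a j‖ ^ 2)
        ≤ 2 * (∑ j, ‖G j x - G j xstar‖ ^ 2) + 2 * S3 := by
      rw [hS3, Finset.mul_sum, Finset.mul_sum, ← Finset.sum_add_distrib]
      exact Finset.sum_le_sum fun j _ => hsplit j
    nlinarith [hkey1]
  have hLHS : ((m : ℝ) ^ b)⁻¹ *
        ∑ J : Fin b → Fin m, ‖gEst f Favg x w J - gradient Favg x‖ ^ 2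
      = 1 / ((b : ℝ) * (m : ℝ)) * S1 := by
    rw [hsumJ]
    obtain ⟨k, rfl⟩ : ∃ k, b = k + 1 := ⟨b - 1, (Nat.succ_pred_eq_of_pos hb).symm⟩
    simp only [Nat.add_sub_cancel]
    have hmne : (m : ℝ) ≠ 0 := ne_of_gt hmR
    have hbne : ((k : ℝ) + 1) ≠ 0 := by positivity
    rw [pow_succ]
    push_cast
    field_simp
  rw [hLHS]
  have hrhs : 1 / ((b : ℝ) * (m : ℝ)) * (4 * L * (m : ℝ) * (Favg x - Favg xstar) + 2 * S3)
      = 4 * L / (b : ℝ) * (Favg x - Favg xstar) + 2 / ((b : ℝ) * (m : ℝ)) * S3 := by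
    field_simp
  calc 1 / ((b : ℝ) * (m : ℝ)) * S1
      ≤ 1 / ((b : ℝ) * (m : ℝ)) * (4 * L * (m : ℝ) * (Favg x - Favg xstar) + 2 * S3) := by
        apply mul_le_mul_of_nonneg_left hS1bound (by positivity)
    _ = 4 * L / (b : ℝ) * (Favg x - Favg xstar) + 2 / ((b : ℝ) * (m : ℝ)) * S3 := hrhs
end

section
/- Under Assumption 1, for any x ∈ ℝ^d, any batch size b ≥ 1, and any points {w_i}_{i∈𝒢} indexed by a finite set 𝒢 of size G ≥ 2, the averaged pairwise deviation of the SVRG estimators satisfies (1/(G(G−1))) Σ_{i,l∈𝒢, i≠l} (1/m^{2b}) Σ_{J ∈ {1,…,m}^b} Σ_{J' ∈ {1,…,m}^b} ‖g(x, w_i, J) − g(x, w_l, J')‖² ≤ (16L/b)·(f(x) − f(x*)) + (8/b)·σ_*², where σ_*² = (1/(Gm)) Σ_{i∈𝒢} Σ_{j=1}^m ‖∇f_j(w_i) − ∇f_j(x*)‖². -/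
open Finset
open scoped BigOperators InnerProductSpace

section Aux

variable {E : Type*} [NormedAddCommGroup E] [InnerProductSpace ℝ E] [CompleteSpace E]

lemma myHasDerivAt_line (h : E → ℝ) (hh : Differentiable ℝ h) (p v : E) (t : ℝ) :
    HasDerivAt (fun s : ℝ => h (p + s • v)) ⟪gradient h (p + t • v), v⟫_ℝ t := by
  have h1 : HasFDerivAt h ((InnerProductSpace.toDual ℝ E) (gradient h (p + t • v))) (p + t • v) :=
    hasGradientAt_iff_hasFDerivAt.mp (hh _).hasGradientAt
  have h2 : HasDerivAt (fun s : ℝ => p + s • v) v t := by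
    simpa using ((hasDerivAt_id t).smul_const v).const_add p
  have h3 := h1.comp_hasDerivAt t h2
  simp only [InnerProductSpace.toDual_apply_apply] at h3
  exact h3

lemma myConvex_grad_ineq (h : E → ℝ) (hconv : ConvexOn ℝ Set.univ h)
    (hh : Differentiable ℝ h) (p q : E) :
    h p + ⟪gradient h p, q - p⟫_ℝ ≤ h q := by
  set v := q - p with hv
  have hphi : ConvexOn ℝ Set.univ (fun s : ℝ => h (p + s • v)) := by
    have := hconv.comp_affineMap (AffineMap.lineMap p q : ℝ →ᵃ[ℝ] E)
    have hfun : (fun s : ℝ => h (p + s • v)) = h ∘ AffineMap.lineMap p q := by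
      funext s
      simp [AffineMap.lineMap_apply, hv, add_comm]
    rw [hfun]
    exact this.subset (Set.subset_univ _) convex_univ
  have hd : HasDerivAt (fun s : ℝ => h (p + s • v)) ⟪gradient h p, v⟫_ℝ 0 := by
    have := myHasDerivAt_line h hh p v 0
    simpa using this
  have := hphi.le_slope_of_hasDerivAt (Set.mem_univ (0:ℝ)) (Set.mem_univ (1:ℝ)) one_pos.gt hd
  rw [slope_def_field] at this
  simp only [one_smul, zero_smul, add_zero, div_one] at this
  have hpv : p + v = q := by simp [hv]
  rw [hpv] at this
  linarith

lemma myDescent (h : E → ℝ) (L : ℝ) (hL : 0 < L) (hh : Differentiable ℝ h)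
    (hlip : ∀ a c : E, ‖gradient h a - gradient h c‖ ≤ L * ‖a - c‖) (p q : E) :
    h q ≤ h p + ⟪gradient h p, q - p⟫_ℝ + L / 2 * ‖q - p‖ ^ 2 := by
  set v := q - p with hv
  set ψ : ℝ → ℝ := fun t => h (p + t • v) - t * ⟪gradient h p, v⟫_ℝ - L * t ^ 2 / 2 * ‖v‖ ^ 2
    with hψ
  have hder : ∀ t : ℝ, HasDerivAt ψ
      (⟪gradient h (p + t • v), v⟫_ℝ - ⟪gradient h p, v⟫_ℝ - L * t * ‖v‖ ^ 2) t := by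
    intro t
    have h1 := myHasDerivAt_line h hh p v t
    have h2 : HasDerivAt (fun t : ℝ => t * ⟪gradient h p, v⟫_ℝ) ⟪gradient h p, v⟫_ℝ t := by
      simpa using (hasDerivAt_id t).mul_const ⟪gradient h p, v⟫_ℝ
    have h3 : HasDerivAt (fun t : ℝ => L * t ^ 2 / 2 * ‖v‖ ^ 2) (L * t * ‖v‖ ^ 2) t := by
      have : HasDerivAt (fun t : ℝ => t ^ 2) (2 * t) t := by
        simpa using hasDerivAt_pow 2 t
      have := ((this.const_mul L).div_const 2).mul_const (‖v‖ ^ 2)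
      convert (show HasDerivAt (fun y : ℝ => L * y ^ 2 / 2 * ‖v‖ ^ 2)
        (L * (2 * t) / 2 * ‖v‖ ^ 2) t from this) using 1
      ring
    exact (h1.sub h2).sub h3
  have hanti : AntitoneOn ψ (Set.Icc (0:ℝ) 1) := by
    apply antitoneOn_of_deriv_nonpos (convex_Icc 0 1)
    · exact fun t _ => ((hder t).continuousAt).continuousWithinAt
    · exact fun t _ => ((hder t).differentiableAt).differentiableWithinAt
    · intro t ht
      rw [interior_Icc] at ht
      rw [(hder t).deriv]
      have key : ⟪gradient h (p + t • v) - gradient h p, v⟫_ℝ ≤ L * t * ‖v‖ ^ 2 := by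
        calc ⟪gradient h (p + t • v) - gradient h p, v⟫_ℝ
            ≤ ‖gradient h (p + t • v) - gradient h p‖ * ‖v‖ := real_inner_le_norm _ _
          _ ≤ (L * ‖(p + t • v) - p‖) * ‖v‖ := by
              gcongr; exact hlip _ _
          _ = L * t * ‖v‖ ^ 2 := by
              simp [norm_smul, abs_of_pos ht.1]; ring
      rw [inner_sub_left] at key
      linarith
  have h01 := hanti (Set.mem_Icc.mpr ⟨le_refl 0, zero_le_one⟩)
      (Set.mem_Icc.mpr ⟨zero_le_one, le_refl 1⟩) zero_le_one
  have e0 : ψ 0 = h p := by simp [hψ]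
  have e1 : ψ 1 = h q - ⟪gradient h p, v⟫_ℝ - L / 2 * ‖v‖ ^ 2 := by
    have hpv : p + v = q := by simp [hv]
    simp [hψ, hpv]
  rw [e0, e1] at h01
  linarith

lemma myCocoercive (h : E → ℝ) (L : ℝ) (hL : 0 < L) (hconv : ConvexOn ℝ Set.univ h)
    (hh : Differentiable ℝ h)
    (hlip : ∀ a c : E, ‖gradient h a - gradient h c‖ ≤ L * ‖a - c‖) (a c : E) :
    ‖gradient h a - gradient h c‖ ^ 2 ≤ 2 * L * (h a - h c - ⟪gradient h c, a - c⟫_ℝ) := by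
  set g := gradient h a - gradient h c with hg
  set z := a - L⁻¹ • g with hz
  have h1 : h c + ⟪gradient h c, z - c⟫_ℝ ≤ h z := myConvex_grad_ineq h hconv hh c z
  have h2 : h z ≤ h a + ⟪gradient h a, z - a⟫_ℝ + L / 2 * ‖z - a‖ ^ 2 :=
    myDescent h L hL hh hlip a z
  have hza : z - a = -(L⁻¹ • g) := by rw [hz]; abel
  have hzc : z - c = (a - c) - L⁻¹ • g := by rw [hz]; abel
  have e1 : ⟪gradient h c, z - c⟫_ℝ = ⟪gradient h c, a - c⟫_ℝ - L⁻¹ * ⟪gradient h c, g⟫_ℝ := by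
    rw [hzc, inner_sub_right, real_inner_smul_right]
  have e2 : ⟪gradient h a, z - a⟫_ℝ = - (L⁻¹ * ⟪gradient h a, g⟫_ℝ) := by
    rw [hza, inner_neg_right, real_inner_smul_right]
  have e3 : ‖z - a‖ ^ 2 = L⁻¹ ^ 2 * ‖g‖ ^ 2 := by
    rw [hza, norm_neg, norm_smul, Real.norm_eq_abs, abs_of_pos (inv_pos.mpr hL)]
    ring
  have e4 : ⟪gradient h a, g⟫_ℝ - ⟪gradient h c, g⟫_ℝ = ‖g‖ ^ 2 := by
    rw [← inner_sub_left, ← hg, real_inner_self_eq_norm_sq]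
  rw [e1] at h1
  rw [e2, e3] at h2
  have key : L⁻¹ * (⟪gradient h a, g⟫_ℝ - ⟪gradient h c, g⟫_ℝ)
      ≤ (h a - h c - ⟪gradient h c, a - c⟫_ℝ) + L / 2 * (L⁻¹ ^ 2 * ‖g‖ ^ 2) := by
    nlinarith [h1, h2]
  rw [e4] at key
  have h2L : (0:ℝ) ≤ 2 * L := by positivity
  have := mul_le_mul_of_nonneg_left key h2L
  have hLne : L ≠ 0 := ne_of_gt hL
  have eL : 2 * L * (L⁻¹ * ‖g‖ ^ 2) = 2 * ‖g‖ ^ 2 := by field_simp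
  have eR : 2 * L * ((h a - h c - ⟪gradient h c, a - c⟫_ℝ) + L / 2 * (L⁻¹ ^ 2 * ‖g‖ ^ 2))
      = 2 * L * (h a - h c - ⟪gradient h c, a - c⟫_ℝ) + ‖g‖ ^ 2 := by
    field_simp
  rw [eL, eR] at this
  linarith

lemma mySum_eval_one {κ : Type*} [Fintype κ] [DecidableEq κ] {m : ℕ} (t : κ) (h : Fin m → ℝ) :
    ∑ J : κ → Fin m, h (J t) = (m : ℝ) ^ (Fintype.card κ - 1) * ∑ j, h j := by
  have e1 : ∑ J : κ → Fin m, h (J t)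
      = ∑ p : Fin m × ({ j // j ≠ t } → Fin m), h p.1 :=
    Fintype.sum_equiv (Equiv.funSplitAt t (Fin m)) _ _ (fun J => rfl)
  rw [e1, Fintype.sum_prod_type]
  simp only [Finset.sum_const, Finset.card_univ, nsmul_eq_mul]
  rw [← Finset.mul_sum]
  congr 1
  rw [Fintype.card_fun]
  have : Fintype.card { j // j ≠ t } = Fintype.card κ - 1 := by
    rw [Fintype.card_subtype_compl, Fintype.card_subtype_eq]
  rw [this, Fintype.card_fin]
  push_cast
  ring

lemma mySum_eval_two {κ : Type*} [Fintype κ] [DecidableEq κ] {m : ℕ} (t t' : κ) (hne : t' ≠ t)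
    (F : Fin m → Fin m → ℝ) :
    ∑ J : κ → Fin m, F (J t) (J t')
      = (m : ℝ) ^ (Fintype.card κ - 2) * ∑ j, ∑ j', F j j' := by
  have e1 : ∑ J : κ → Fin m, F (J t) (J t')
      = ∑ p : Fin m × ({ j // j ≠ t } → Fin m), F p.1 (p.2 ⟨t', hne⟩) :=
    Fintype.sum_equiv (Equiv.funSplitAt t (Fin m)) (fun J => F (J t) (J t'))
      (fun p => F p.1 (p.2 ⟨t', hne⟩)) (fun J => rfl)
  rw [e1, Fintype.sum_prod_type]
  have e2 : ∀ a : Fin m, ∑ g : { j // j ≠ t } → Fin m, F a (g ⟨t', hne⟩)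
      = (m : ℝ) ^ (Fintype.card { j // j ≠ t } - 1) * ∑ j', F a j' :=
    fun a => mySum_eval_one (⟨t', hne⟩ : {j // j ≠ t}) (fun j' => F a j')
  simp only [e2]
  rw [← Finset.mul_sum]
  congr 2
  rw [Fintype.card_subtype_compl, Fintype.card_subtype_eq]
  omega

lemma myVariance {m b : ℕ} {E : Type*} [NormedAddCommGroup E] [InnerProductSpace ℝ E]
    (X : Fin m → E) (hX : ∑ j, X j = 0) :
    ∑ J : Fin b → Fin m, ‖∑ t, X (J t)‖ ^ 2
      = (b : ℝ) * (m : ℝ) ^ (b - 1) * ∑ j, ‖X j‖ ^ 2 := by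
  have expand : ∀ J : Fin b → Fin m, ‖∑ t, X (J t)‖ ^ 2
      = ∑ t : Fin b, ∑ t' : Fin b, ⟪X (J t), X (J t')⟫_ℝ := by
    intro J
    rw [← real_inner_self_eq_norm_sq, sum_inner]
    exact Finset.sum_congr rfl (fun t _ => inner_sum _ _ _)
  simp only [expand]
  rw [Finset.sum_comm]
  have swap : ∀ t : Fin b, ∑ J : Fin b → Fin m, ∑ t' : Fin b, ⟪X (J t), X (J t')⟫_ℝ
      = ∑ t' : Fin b, ∑ J : Fin b → Fin m, ⟪X (J t), X (J t')⟫_ℝ :=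
    fun t => Finset.sum_comm
  simp only [swap]
  have inner_val : ∀ t t' : Fin b, ∑ J : Fin b → Fin m, ⟪X (J t), X (J t')⟫_ℝ
      = if t' = t then (m : ℝ) ^ (b - 1) * ∑ j, ‖X j‖ ^ 2 else 0 := by
    intro t t'
    by_cases hc : t' = t
    · subst hc
      rw [if_pos rfl]
      have := mySum_eval_one (κ := Fin b) t' (fun j => ‖X j‖ ^ 2)
      rw [Fintype.card_fin] at this
      rw [← this]
      exact Finset.sum_congr rfl (fun J _ => real_inner_self_eq_norm_sq _)
    · rw [if_neg hc]
      have := mySum_eval_two (κ := Fin b) t t' hc (fun j j' => ⟪X j, X j'⟫_ℝ)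
      rw [Fintype.card_fin] at this
      rw [this]
      have : ∑ j : Fin m, ∑ j' : Fin m, ⟪X j, X j'⟫_ℝ = ⟪∑ j, X j, ∑ j', X j'⟫_ℝ := by
        rw [sum_inner]
        exact Finset.sum_congr rfl (fun j _ => (inner_sum _ _ _).symm)
      rw [this, hX, inner_zero_left, mul_zero]
  simp only [inner_val]
  simp [Finset.sum_ite_eq, Finset.card_univ, mul_assoc]

lemma myGradAvg {m : ℕ} (f : Fin m → E → ℝ) (Favg : E → ℝ)
    (hFavg : ∀ x, Favg x = (m : ℝ)⁻¹ * ∑ j, f j x)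
    (hdiff : ∀ j, Differentiable ℝ (f j)) (y : E) :
    HasGradientAt Favg ((m : ℝ)⁻¹ • ∑ j, gradient (f j) y) y := by
  have hfe : Favg = fun x => (m : ℝ)⁻¹ * ∑ j, f j x := funext hFavg
  rw [hasGradientAt_iff_hasFDerivAt, hfe]
  have h1 : ∀ j : Fin m, HasFDerivAt (f j) (InnerProductSpace.toDual ℝ E (gradient (f j) y)) y :=
    fun j => hasGradientAt_iff_hasFDerivAt.mp ((hdiff j) y).hasGradientAt
  have h2 := (HasFDerivAt.fun_sum (fun j (_ : j ∈ Finset.univ) => h1 j)).const_mul ((m : ℝ)⁻¹)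
  rw [map_smul, map_sum]
  exact h2

lemma myGradAvgEq {m : ℕ} (f : Fin m → E → ℝ) (Favg : E → ℝ)
    (hFavg : ∀ x, Favg x = (m : ℝ)⁻¹ * ∑ j, f j x)
    (hdiff : ∀ j, Differentiable ℝ (f j)) (y : E) :
    gradient Favg y = (m : ℝ)⁻¹ • ∑ j, gradient (f j) y :=
  (myGradAvg f Favg hFavg hdiff y).gradient

lemma myGradMin (Favg : E → ℝ) (xstar : E) (hmin : ∀ y, Favg xstar ≤ Favg y) :
    gradient Favg xstar = 0 := by
  have h1 : IsLocalMin Favg xstar := Filter.Eventually.of_forall hmin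
  have h2 : fderiv ℝ Favg xstar = 0 := h1.fderiv_eq_zero
  rw [gradient, h2, map_zero]

lemma myNormSq3 {E : Type*} [NormedAddCommGroup E] [InnerProductSpace ℝ E] (a b e : E) :
    ‖a - b‖ ^ 2 ≤ 2 * ‖a - e‖ ^ 2 + 2 * ‖b - e‖ ^ 2 := by
  have h : ‖a - b‖ ≤ ‖a - e‖ + ‖b - e‖ := by
    have h2 := norm_sub_le (a - e) (b - e)
    have h3 : (a - e) - (b - e) = a - b := by abel
    rwa [h3] at h2
  nlinarith [mul_self_le_mul_self (norm_nonneg (a - b)) h, sq_nonneg (‖a - e‖ - ‖b - e‖),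
    norm_nonneg (a - e), norm_nonneg (b - e)]

lemma myVarLe {m : ℕ} {E : Type*} [NormedAddCommGroup E] [InnerProductSpace ℝ E]
    (Y : Fin m → E) (c0 : E) (h : ∑ j, Y j = (m : ℕ) • c0) :
    ∑ j, ‖Y j - c0‖ ^ 2 ≤ ∑ j, ‖Y j‖ ^ 2 := by
  have expand : ∀ j, ‖Y j - c0‖ ^ 2 = ‖Y j‖ ^ 2 - 2 * ⟪Y j, c0⟫_ℝ + ‖c0‖ ^ 2 :=
    fun j => norm_sub_sq_real _ _
  simp only [expand]
  rw [Finset.sum_add_distrib, Finset.sum_sub_distrib, ← Finset.mul_sum, ← sum_inner, h,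
    Finset.sum_const, Finset.card_univ, Fintype.card_fin]
  have : ⟪(m : ℕ) • c0, c0⟫_ℝ = (m : ℝ) * ‖c0‖ ^ 2 := by
    rw [← Nat.cast_smul_eq_nsmul ℝ, real_inner_smul_left, real_inner_self_eq_norm_sq]
  rw [this, nsmul_eq_mul]
  nlinarith [norm_nonneg c0, sq_nonneg ‖c0‖]

end Aux

lemma myPerPoint {d m b : ℕ} (hm : 1 ≤ m) (hb : 1 ≤ b)
    (f : Fin m → EuclideanSpace ℝ (Fin d) → ℝ)
    (Favg : EuclideanSpace ℝ (Fin d) → ℝ)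
    (hFavg : ∀ x, Favg x = (m : ℝ)⁻¹ * ∑ j : Fin m, f j x)
    (L : ℝ) (hL : 0 < L)
    (hdiff : ∀ j, Differentiable ℝ (f j))
    (hconv : ∀ j, ConvexOn ℝ Set.univ (f j))
    (hsmooth : ∀ j (x y : EuclideanSpace ℝ (Fin d)),
      ‖gradient (f j) x - gradient (f j) y‖ ≤ L * ‖x - y‖)
    (xstar : EuclideanSpace ℝ (Fin d))
    (hmin : ∀ y, Favg xstar ≤ Favg y)
    (x u : EuclideanSpace ℝ (Fin d)) :
    ((m : ℝ) ^ b)⁻¹ * ∑ J : Fin b → Fin m, ‖gEst f Favg x u J - gradient Favg x‖ ^ 2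
      ≤ 4 * L / (b : ℝ) * (Favg x - Favg xstar)
        + 2 / ((b : ℝ) * (m : ℝ)) * ∑ j : Fin m,
            ‖gradient (f j) u - gradient (f j) xstar‖ ^ 2 := by
  have hm0 : (m : ℝ) ≠ 0 := Nat.cast_ne_zero.mpr (by omega)
  have hb0 : (b : ℝ) ≠ 0 := Nat.cast_ne_zero.mpr (by omega)
  have gradEq : ∀ y, gradient Favg y = (m : ℝ)⁻¹ • ∑ j, gradient (f j) y :=
    myGradAvgEq f Favg hFavg hdiff
  have sumGrad : ∀ y, ∑ j, gradient (f j) y = (m : ℕ) • gradient Favg y := by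
    intro y
    rw [gradEq y, ← Nat.cast_smul_eq_nsmul ℝ, smul_smul, mul_inv_cancel₀ hm0, one_smul]
  have gstar0 : gradient Favg xstar = 0 := myGradMin Favg xstar hmin
  have sumgstar : ∑ j, gradient (f j) xstar = 0 := by
    rw [sumGrad xstar, gstar0, smul_zero]
  have hsx : ∑ j, f j x = (m : ℝ) * Favg x := by rw [hFavg x]; field_simp
  have hsxs : ∑ j, f j xstar = (m : ℝ) * Favg xstar := by rw [hFavg xstar]; field_simp
  have cocoSum : ∑ j, ‖gradient (f j) x - gradient (f j) xstar‖ ^ 2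
      ≤ 2 * L * (m : ℝ) * (Favg x - Favg xstar) := by
    calc ∑ j, ‖gradient (f j) x - gradient (f j) xstar‖ ^ 2
        ≤ ∑ j, 2 * L * (f j x - f j xstar - ⟪gradient (f j) xstar, x - xstar⟫_ℝ) :=
          Finset.sum_le_sum (fun j _ =>
            myCocoercive (f j) L hL (hconv j) (hdiff j) (hsmooth j) x xstar)
      _ = 2 * L * ((∑ j, f j x) - (∑ j, f j xstar)
            - ⟪∑ j, gradient (f j) xstar, x - xstar⟫_ℝ) := by
          rw [← Finset.mul_sum, sum_inner, Finset.sum_sub_distrib, Finset.sum_sub_distrib]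
      _ = 2 * L * (m : ℝ) * (Favg x - Favg xstar) := by
          rw [sumgstar, inner_zero_left, hsx, hsxs]; ring
  set Y : Fin m → EuclideanSpace ℝ (Fin d) :=
    fun j => gradient (f j) x - gradient (f j) u with hY
  set c0 : EuclideanSpace ℝ (Fin d) := gradient Favg x - gradient Favg u with hc0
  set X : Fin m → EuclideanSpace ℝ (Fin d) := fun j => Y j - c0 with hXdef
  have hYsum : ∑ j, Y j = (m : ℕ) • c0 := by
    rw [hY, hc0, Finset.sum_sub_distrib, sumGrad x, sumGrad u, smul_sub]
  have hXsum : ∑ j, X j = 0 := by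
    rw [hXdef]
    simp only
    rw [Finset.sum_sub_distrib, hYsum, Finset.sum_const, Finset.card_univ, Fintype.card_fin,
      sub_self]
  have hgE : ∀ J : Fin b → Fin m, gEst f Favg x u J - gradient Favg x
      = (b : ℝ)⁻¹ • ∑ t, X (J t) := by
    intro J
    have e1 : ∑ t, X (J t) = (∑ t, Y (J t)) - (b : ℕ) • c0 := by
      rw [hXdef]
      simp only
      rw [Finset.sum_sub_distrib, Finset.sum_const, Finset.card_univ, Fintype.card_fin]
    rw [e1, smul_sub, ← Nat.cast_smul_eq_nsmul ℝ (b : ℕ) c0, smul_smul,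
      inv_mul_cancel₀ hb0, one_smul]
    rw [gEst, hc0, hY]
    abel
  have normEq : ∀ J : Fin b → Fin m, ‖gEst f Favg x u J - gradient Favg x‖ ^ 2
      = ((b : ℝ)⁻¹) ^ 2 * ‖∑ t, X (J t)‖ ^ 2 := by
    intro J
    rw [hgE J, norm_smul, Real.norm_eq_abs, abs_of_pos (by positivity), mul_pow]
  have sumJ : ∑ J : Fin b → Fin m, ‖gEst f Favg x u J - gradient Favg x‖ ^ 2
      = ((b : ℝ)⁻¹) ^ 2 * ((b : ℝ) * (m : ℝ) ^ (b - 1) * ∑ j, ‖X j‖ ^ 2) := by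
    simp only [normEq]
    rw [← Finset.mul_sum, myVariance X hXsum]
  have hpow : (m : ℝ) ^ b = (m : ℝ) ^ (b - 1) * m := by
    conv_lhs => rw [show b = (b - 1) + 1 by omega]
    rw [pow_succ]
  have hXb : ∑ j, ‖X j‖ ^ 2
      ≤ 4 * L * (m : ℝ) * (Favg x - Favg xstar)
        + 2 * ∑ j, ‖gradient (f j) u - gradient (f j) xstar‖ ^ 2 := by
    have h1 : ∑ j, ‖X j‖ ^ 2 ≤ ∑ j, ‖Y j‖ ^ 2 := myVarLe Y c0 hYsum
    have h2 : ∑ j, ‖Y j‖ ^ 2 ≤ ∑ j, (2 * ‖gradient (f j) x - gradient (f j) xstar‖ ^ 2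
        + 2 * ‖gradient (f j) u - gradient (f j) xstar‖ ^ 2) := by
      apply Finset.sum_le_sum
      intro j _
      have := myNormSq3 (gradient (f j) x) (gradient (f j) u) (gradient (f j) xstar)
      simpa [hY] using this
    rw [Finset.sum_add_distrib, ← Finset.mul_sum, ← Finset.mul_sum] at h2
    linarith [h1, h2, cocoSum]
  rw [sumJ]
  have hXnn : (0:ℝ) ≤ ∑ j, ‖X j‖ ^ 2 := Finset.sum_nonneg (fun j _ => sq_nonneg _)
  have heq : ∀ A : ℝ, ((m : ℝ) ^ b)⁻¹ * (((b : ℝ)⁻¹) ^ 2 * ((b : ℝ) * (m : ℝ) ^ (b - 1) * A))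
      = ((b : ℝ) * (m : ℝ))⁻¹ * A := by
    intro A
    rw [hpow]
    have h1 : (m : ℝ) ^ (b - 1) ≠ 0 := pow_ne_zero _ hm0
    field_simp
  rw [heq]
  have hstep := mul_le_mul_of_nonneg_left hXb
    (show (0:ℝ) ≤ ((b : ℝ) * (m : ℝ))⁻¹ by positivity)
  have hfin : ((b : ℝ) * (m : ℝ))⁻¹ * (4 * L * (m : ℝ) * (Favg x - Favg xstar)
        + 2 * ∑ j, ‖gradient (f j) u - gradient (f j) xstar‖ ^ 2)
      = 4 * L / (b : ℝ) * (Favg x - Favg xstar)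
        + 2 / ((b : ℝ) * (m : ℝ)) * ∑ j, ‖gradient (f j) u - gradient (f j) xstar‖ ^ 2 := by
    field_simp
  linarith [hstep, hfin.le, hfin.ge]

/-- Averaged pairwise-deviation bound for the workers' SVRG estimators under Assumption 1. -/
theorem svrg_pairwise_deviation_bound
    {d m b G : ℕ} (hm : 1 ≤ m) (hb : 1 ≤ b) (hG : 2 ≤ G)
    {ι : Type*} [DecidableEq ι] (𝒢 : Finset ι) (hcard : 𝒢.card = G)
    -- Assumption 1
    (f : Fin m → EuclideanSpace ℝ (Fin d) → ℝ)
    (Favg : EuclideanSpace ℝ (Fin d) → ℝ)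
    (hFavg : ∀ x, Favg x = (m : ℝ)⁻¹ * ∑ j : Fin m, f j x)
    (L μc : ℝ) (hL : 0 < L) (hμ : 0 < μc)
    (hdiff : ∀ j, Differentiable ℝ (f j))
    (hconv : ∀ j, ConvexOn ℝ Set.univ (f j))
    (hsmooth : ∀ j (x y : EuclideanSpace ℝ (Fin d)),
      ‖gradient (f j) x - gradient (f j) y‖ ≤ L * ‖x - y‖)
    (hstrong : ∀ x y : EuclideanSpace ℝ (Fin d),
      Favg x + ⟪gradient Favg x, y - x⟫_ℝ + μc / 2 * ‖y - x‖ ^ 2 ≤ Favg y)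
    (xstar : EuclideanSpace ℝ (Fin d))
    (hmin : ∀ y, Favg xstar ≤ Favg y)
    -- current point and reference points
    (x : EuclideanSpace ℝ (Fin d)) (w : ι → EuclideanSpace ℝ (Fin d)) :
    ((G : ℝ) * ((G : ℝ) - 1))⁻¹ *
        ∑ i ∈ 𝒢, ∑ l ∈ 𝒢.erase i,
          ((m : ℝ) ^ (2 * b))⁻¹ *
            ∑ J : Fin b → Fin m, ∑ J' : Fin b → Fin m,
              ‖gEst f Favg x (w i) J - gEst f Favg x (w l) J'‖ ^ 2
      ≤ 16 * L / (b : ℝ) * (Favg x - Favg xstar)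
        + 8 / (b : ℝ) * (((G : ℝ) * (m : ℝ))⁻¹ * ∑ i ∈ 𝒢, ∑ j : Fin m,
            ‖gradient (f j) (w i) - gradient (f j) xstar‖ ^ 2) := by
  have hm0 : (m : ℝ) ≠ 0 := Nat.cast_ne_zero.mpr (by omega)
  have hb0 : (b : ℝ) ≠ 0 := Nat.cast_ne_zero.mpr (by omega)
  have hG0 : (0:ℝ) < (G : ℝ) := by exact_mod_cast (by omega : 0 < G)
  have hG1 : (0:ℝ) < (G : ℝ) - 1 := by
    have : (2:ℝ) ≤ (G : ℝ) := by exact_mod_cast hG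
    linarith
  have hmb0 : ((m : ℝ) ^ b) ≠ 0 := pow_ne_zero _ hm0
  set Δ : ℝ := Favg x - Favg xstar with hΔ
  set σ : ι → ℝ := fun i => ∑ j : Fin m,
    ‖gradient (f j) (w i) - gradient (f j) xstar‖ ^ 2 with hσ
  set S : ℝ := ∑ i ∈ 𝒢, σ i with hS
  set K : ℝ := 16 * L / (b : ℝ) * Δ with hK
  set c4 : ℝ := 4 / ((b : ℝ) * (m : ℝ)) with hc4
  set Q : EuclideanSpace ℝ (Fin d) → ℝ := fun u =>
    ((m : ℝ) ^ b)⁻¹ * ∑ J : Fin b → Fin m, ‖gEst f Favg x u J - gradient Favg x‖ ^ 2 with hQ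
  have hQb : ∀ u, Q u ≤ 4 * L / (b : ℝ) * Δ + (2 / ((b : ℝ) * (m : ℝ))) * ∑ j : Fin m,
      ‖gradient (f j) u - gradient (f j) xstar‖ ^ 2 :=
    fun u => myPerPoint hm hb f Favg hFavg L hL hdiff hconv hsmooth xstar hmin x u
  -- pairwise bound
  have hpair : ∀ i l : ι,
      ((m : ℝ) ^ (2 * b))⁻¹ * ∑ J : Fin b → Fin m, ∑ J' : Fin b → Fin m,
        ‖gEst f Favg x (w i) J - gEst f Favg x (w l) J'‖ ^ 2
      ≤ 2 * Q (w i) + 2 * Q (w l) := by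
    intro i l
    have h1 : ∑ J : Fin b → Fin m, ∑ J' : Fin b → Fin m,
        ‖gEst f Favg x (w i) J - gEst f Favg x (w l) J'‖ ^ 2
        ≤ ∑ J : Fin b → Fin m, ∑ J' : Fin b → Fin m,
          (2 * ‖gEst f Favg x (w i) J - gradient Favg x‖ ^ 2
            + 2 * ‖gEst f Favg x (w l) J' - gradient Favg x‖ ^ 2) := by
      apply Finset.sum_le_sum; intro J _
      apply Finset.sum_le_sum; intro J' _
      exact myNormSq3 _ _ _
    have hcardJ : (Finset.univ : Finset (Fin b → Fin m)).card = m ^ b := by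
      rw [Finset.card_univ, Fintype.card_fun, Fintype.card_fin, Fintype.card_fin]
    have h2 : ∑ J : Fin b → Fin m, ∑ J' : Fin b → Fin m,
          (2 * ‖gEst f Favg x (w i) J - gradient Favg x‖ ^ 2
            + 2 * ‖gEst f Favg x (w l) J' - gradient Favg x‖ ^ 2)
        = ((m : ℝ) ^ b) * (2 * ∑ J : Fin b → Fin m,
              ‖gEst f Favg x (w i) J - gradient Favg x‖ ^ 2)
          + ((m : ℝ) ^ b) * (2 * ∑ J' : Fin b → Fin m,
              ‖gEst f Favg x (w l) J' - gradient Favg x‖ ^ 2) := by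
      simp only [Finset.sum_add_distrib, Finset.sum_const, hcardJ, nsmul_eq_mul,
        ← Finset.mul_sum]
      push_cast
      ring
    have hpow2 : ((m : ℝ) ^ (2 * b))⁻¹ = ((m : ℝ) ^ b)⁻¹ * ((m : ℝ) ^ b)⁻¹ := by
      rw [two_mul, pow_add, mul_inv]
    have h3 := mul_le_mul_of_nonneg_left (h1.trans h2.le)
      (show (0:ℝ) ≤ ((m : ℝ) ^ (2 * b))⁻¹ by positivity)
    calc ((m : ℝ) ^ (2 * b))⁻¹ * ∑ J : Fin b → Fin m, ∑ J' : Fin b → Fin m,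
          ‖gEst f Favg x (w i) J - gEst f Favg x (w l) J'‖ ^ 2
        ≤ ((m : ℝ) ^ (2 * b))⁻¹ * (((m : ℝ) ^ b) * (2 * ∑ J : Fin b → Fin m,
              ‖gEst f Favg x (w i) J - gradient Favg x‖ ^ 2)
          + ((m : ℝ) ^ b) * (2 * ∑ J' : Fin b → Fin m,
              ‖gEst f Favg x (w l) J' - gradient Favg x‖ ^ 2)) := h3
      _ = 2 * Q (w i) + 2 * Q (w l) := by
          rw [hpow2, hQ]
          simp only
          field_simp
  have htermb : ∀ i l : ι,
      ((m : ℝ) ^ (2 * b))⁻¹ * ∑ J : Fin b → Fin m, ∑ J' : Fin b → Fin m,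
        ‖gEst f Favg x (w i) J - gEst f Favg x (w l) J'‖ ^ 2
      ≤ K + c4 * (σ i + σ l) := by
    intro i l
    refine (hpair i l).trans ?_
    have h1 := hQb (w i)
    have h2 := hQb (w l)
    simp only [hK, hc4, hσ]
    calc 2 * Q (w i) + 2 * Q (w l)
        ≤ 2 * (4 * L / (b : ℝ) * Δ + 2 / ((b : ℝ) * (m : ℝ)) * ∑ j : Fin m,
              ‖gradient (f j) (w i) - gradient (f j) xstar‖ ^ 2)
          + 2 * (4 * L / (b : ℝ) * Δ + 2 / ((b : ℝ) * (m : ℝ)) * ∑ j : Fin m,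
              ‖gradient (f j) (w l) - gradient (f j) xstar‖ ^ 2) :=
          add_le_add (mul_le_mul_of_nonneg_left h1 (by norm_num))
            (mul_le_mul_of_nonneg_left h2 (by norm_num))
      _ = 16 * L / (b : ℝ) * Δ + 4 / ((b : ℝ) * (m : ℝ)) * ((∑ j : Fin m,
              ‖gradient (f j) (w i) - gradient (f j) xstar‖ ^ 2) + ∑ j : Fin m,
              ‖gradient (f j) (w l) - gradient (f j) xstar‖ ^ 2) := by ring
  -- sum the bound over pairs
  have hsum : ∑ i ∈ 𝒢, ∑ l ∈ 𝒢.erase i,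
      ((m : ℝ) ^ (2 * b))⁻¹ * ∑ J : Fin b → Fin m, ∑ J' : Fin b → Fin m,
        ‖gEst f Favg x (w i) J - gEst f Favg x (w l) J'‖ ^ 2
      ≤ ∑ i ∈ 𝒢, ∑ l ∈ 𝒢.erase i, (K + c4 * (σ i + σ l)) := by
    apply Finset.sum_le_sum; intro i _
    apply Finset.sum_le_sum; intro l _
    exact htermb i l
  have hinner : ∀ i ∈ 𝒢, ∑ l ∈ 𝒢.erase i, (K + c4 * (σ i + σ l))
      = ((G : ℝ) - 1) * (K + c4 * σ i) + c4 * (S - σ i) := by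
    intro i hi
    have hsplit : ∀ l : ι, K + c4 * (σ i + σ l) = (K + c4 * σ i) + c4 * σ l := by
      intro l; ring
    simp only [hsplit]
    rw [Finset.sum_add_distrib, Finset.sum_const, Finset.card_erase_of_mem hi, hcard,
      ← Finset.mul_sum, Finset.sum_erase_eq_sub hi, ← hS, nsmul_eq_mul]
    have : ((G - 1 : ℕ) : ℝ) = (G : ℝ) - 1 := by
      have : 1 ≤ G := by omega
      push_cast [Nat.cast_sub this]
      ring
    rw [this]
  have houter : ∑ i ∈ 𝒢, (((G : ℝ) - 1) * (K + c4 * σ i) + c4 * (S - σ i))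
      = (G : ℝ) * ((G : ℝ) - 1) * K + 2 * ((G : ℝ) - 1) * c4 * S := by
    have hexp : ∀ i : ι, ((G : ℝ) - 1) * (K + c4 * σ i) + c4 * (S - σ i)
        = (((G : ℝ) - 1) * K + c4 * S) + (((G : ℝ) - 2) * c4) * σ i := by
      intro i; ring
    simp only [hexp]
    rw [Finset.sum_add_distrib, Finset.sum_const, hcard, ← Finset.mul_sum, ← hS, nsmul_eq_mul]
    ring
  have htot : ∑ i ∈ 𝒢, ∑ l ∈ 𝒢.erase i, (K + c4 * (σ i + σ l))
      = (G : ℝ) * ((G : ℝ) - 1) * K + 2 * ((G : ℝ) - 1) * c4 * S := by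
    rw [Finset.sum_congr rfl hinner, houter]
  have hfinal := mul_le_mul_of_nonneg_left (hsum.trans htot.le)
    (show (0:ℝ) ≤ ((G : ℝ) * ((G : ℝ) - 1))⁻¹ by positivity)
  calc ((G : ℝ) * ((G : ℝ) - 1))⁻¹ *
        ∑ i ∈ 𝒢, ∑ l ∈ 𝒢.erase i,
          ((m : ℝ) ^ (2 * b))⁻¹ *
            ∑ J : Fin b → Fin m, ∑ J' : Fin b → Fin m,
              ‖gEst f Favg x (w i) J - gEst f Favg x (w l) J'‖ ^ 2
      ≤ ((G : ℝ) * ((G : ℝ) - 1))⁻¹ *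
          ((G : ℝ) * ((G : ℝ) - 1) * K + 2 * ((G : ℝ) - 1) * c4 * S) := hfinal
    _ = 16 * L / (b : ℝ) * Δ + 8 / (b : ℝ) * (((G : ℝ) * (m : ℝ))⁻¹ * S) := by
        rw [hK, hc4]
        field_simp
        ring
    _ = 16 * L / (b : ℝ) * (Favg x - Favg xstar)
        + 8 / (b : ℝ) * (((G : ℝ) * (m : ℝ))⁻¹ * ∑ i ∈ 𝒢, ∑ j : Fin m,
            ‖gradient (f j) (w i) - gradient (f j) xstar‖ ^ 2) := by
        rw [hΔ, hS, hσ]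
end

section
/- Under Assumption 1, let x ∈ ℝ^d and let {w_i}_{i∈𝒢} be points indexed by a finite nonempty set 𝒢 of size G. Suppose each w_i⁺ is a random point equal to x with probability p ∈ (0,1] and equal to w_i otherwise, independently across i ∈ 𝒢. Then E[σ₊²] = (1−p)·σ² + (p/m) Σ_{j=1}^m ‖∇f_j(x) − ∇f_j(x*)‖² ≤ (1−p)·σ² + 2Lp·(f(x) − f(x*)), where σ² = (1/(Gm)) Σ_{i∈𝒢} Σ_{j=1}^m ‖∇f_j(w_i) − ∇f_j(x*)‖² and σ₊² = (1/(Gm)) Σ_{i∈𝒢} Σ_{j=1}^m ‖∇f_j(w_i⁺) − ∇f_j(x*)‖². -/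
open MeasureTheory ProbabilityTheory Finset
open scoped BigOperators InnerProductSpace ENNReal

section Helpers
variable {E : Type*} [NormedAddCommGroup E] [InnerProductSpace ℝ E] [CompleteSpace E]

set_option linter.unusedSectionVars false

lemma phi_hasDerivAt {g : E → ℝ} {g' : E → E} (hg : ∀ z, HasGradientAt g (g' z) z)
    (a v : E) (t : ℝ) :
    HasDerivAt (fun t : ℝ => g (a + t • v)) ⟪g' (a + t • v), v⟫_ℝ t := by
  have hline : HasDerivAt (fun t : ℝ => a + t • v) v t := by
    simpa using ((hasDerivAt_id t).smul_const v).const_add a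
  have h1 := (hasGradientAt_iff_hasFDerivAt.mp (hg (a + t • v))).comp_hasDerivAt t hline
  have h2 : HasDerivAt (fun t : ℝ => g (a + t • v))
      ((InnerProductSpace.toDual ℝ E) (g' (a + t • v)) v) t := h1
  simpa [InnerProductSpace.toDual_apply_apply] using h2

lemma grad_cont {g' : E → E} {L : ℝ} (hL : 0 < L)
    (hlip : ∀ a b, ‖g' a - g' b‖ ≤ L * ‖a - b‖) : Continuous g' := by
  refine (LipschitzWith.of_dist_le_mul (K := L.toNNReal) fun a b => ?_).continuous
  simp only [dist_eq_norm, Real.coe_toNNReal L hL.le]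
  exact hlip a b

lemma descent {g : E → ℝ} {g' : E → E} {L : ℝ} (hL : 0 < L)
    (hg : ∀ z, HasGradientAt g (g' z) z)
    (hlip : ∀ a b, ‖g' a - g' b‖ ≤ L * ‖a - b‖) (a b : E) :
    g b ≤ g a + ⟪g' a, b - a⟫_ℝ + L / 2 * ‖b - a‖ ^ 2 := by
  set v := b - a with hv
  have hcont : Continuous fun t : ℝ => ⟪g' (a + t • v), v⟫_ℝ :=
    ((grad_cont hL hlip).comp (by continuity)).inner continuous_const
  have hint : g (a + (1:ℝ) • v) - g (a + (0:ℝ) • v)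
      = ∫ t in (0:ℝ)..1, ⟪g' (a + t • v), v⟫_ℝ := by
    refine (intervalIntegral.integral_eq_sub_of_hasDerivAt
      (fun t _ => phi_hasDerivAt hg a v t) (hcont.intervalIntegrable 0 1)).symm
  have hb : a + (1:ℝ) • v = b := by simp [hv]
  have ha : a + (0:ℝ) • v = a := by simp
  rw [hb, ha] at hint
  have hmono : (∫ t in (0:ℝ)..1, ⟪g' (a + t • v), v⟫_ℝ)
      ≤ ∫ t in (0:ℝ)..1, (⟪g' a, v⟫_ℝ + L * t * ‖v‖ ^ 2) := by
    refine intervalIntegral.integral_mono_on (by norm_num)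
      (hcont.intervalIntegrable 0 1)
      ((by continuity : Continuous fun t : ℝ => (⟪g' a, v⟫_ℝ + L * t * ‖v‖ ^ 2)).intervalIntegrable 0 1)
      (fun t ht => ?_)
    have h1 : ⟪g' (a + t • v), v⟫_ℝ - ⟪g' a, v⟫_ℝ = ⟪g' (a + t • v) - g' a, v⟫_ℝ := by
      rw [inner_sub_left]
    have h2 : ⟪g' (a + t • v) - g' a, v⟫_ℝ ≤ ‖g' (a + t • v) - g' a‖ * ‖v‖ :=
      real_inner_le_norm _ _
    have h3 : ‖g' (a + t • v) - g' a‖ ≤ L * ‖t • v‖ := by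
      simpa using hlip (a + t • v) a
    have h4 : ‖t • v‖ = t * ‖v‖ := by
      rw [norm_smul, Real.norm_eq_abs, abs_of_nonneg ht.1]
    rw [h4] at h3
    have h5 := h2.trans (mul_le_mul_of_nonneg_right h3 (norm_nonneg v))
    have h6 : L * (t * ‖v‖) * ‖v‖ = L * t * ‖v‖ ^ 2 := by ring
    linarith
  have hval : (∫ t in (0:ℝ)..1, (⟪g' a, v⟫_ℝ + L * t * ‖v‖ ^ 2))
      = ⟪g' a, v⟫_ℝ + L / 2 * ‖v‖ ^ 2 := by
    have hc2 : Continuous fun t : ℝ => L * t * ‖v‖ ^ 2 := by continuity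
    rw [intervalIntegral.integral_add (intervalIntegrable_const) (hc2.intervalIntegrable 0 1)]
    simp only [intervalIntegral.integral_const, smul_eq_mul, sub_zero, one_mul]
    have : (∫ t in (0:ℝ)..1, L * t * ‖v‖ ^ 2)
        = (L * ‖v‖ ^ 2) * ∫ t in (0:ℝ)..1, t := by
      rw [← intervalIntegral.integral_const_mul]
      congr 1; ext t; ring
    rw [this, integral_id]; ring
  rw [hval] at hmono
  linarith [hint ▸ hmono]

lemma convexlb {g : E → ℝ} {g' : E → E} (hg : ∀ z, HasGradientAt g (g' z) z)
    (hc : ConvexOn ℝ Set.univ g) (a b : E) :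
    g a + ⟪g' a, b - a⟫_ℝ ≤ g b := by
  set v := b - a with hv
  have hphi : ConvexOn ℝ Set.univ (fun t : ℝ => g (a + t • v)) := by
    have := hc.comp_affineMap (AffineMap.lineMap a b : ℝ →ᵃ[ℝ] E)
    have heq : (g ∘ (AffineMap.lineMap a b : ℝ →ᵃ[ℝ] E)) = fun t : ℝ => g (a + t • v) := by
      funext t
      simp [AffineMap.lineMap_apply, hv]
      congr 1
      abel
    rw [heq] at this
    simpa using this
  have hder := phi_hasDerivAt hg a v 0
  have hle := hphi.le_slope_of_hasDerivAt (Set.mem_univ (0:ℝ)) (Set.mem_univ (1:ℝ))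
    (by norm_num) hder
  simp only [slope_def_field] at hle
  have h0 : a + (0:ℝ) • v = a := by simp
  have h1 : a + (1:ℝ) • v = b := by simp [hv]
  rw [h0, h1] at hle
  simp only [div_one, sub_zero] at hle
  linarith [hle]

lemma cocoercive {g : E → ℝ} {g' : E → E} {L : ℝ} (hL : 0 < L)
    (hg : ∀ z, HasGradientAt g (g' z) z)
    (hlip : ∀ a b, ‖g' a - g' b‖ ≤ L * ‖a - b‖)
    (hc : ConvexOn ℝ Set.univ g) (a c : E) :
    ‖g' a - g' c‖ ^ 2 ≤ 2 * L * (g a - g c - ⟪g' c, a - c⟫_ℝ) := by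
  set h : E → ℝ := fun z => g z - ⟪g' c, z⟫_ℝ with hh
  set h' : E → E := fun z => g' z - g' c with hh'
  have hgh : ∀ z, HasGradientAt h (h' z) z := by
    intro z
    have h1 := hasGradientAt_iff_hasFDerivAt.mp (hg z)
    have h2 : HasFDerivAt (fun z : E => ⟪g' c, z⟫_ℝ)
        ((InnerProductSpace.toDual ℝ E) (g' c)) z := by
      have := ((InnerProductSpace.toDual ℝ E) (g' c)).hasFDerivAt (x := z)
      convert this using 1
      funext y; simp [InnerProductSpace.toDual_apply_apply]
    have h3 := h1.sub h2
    rw [← map_sub] at h3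
    exact hasGradientAt_iff_hasFDerivAt.mpr h3
  have hliph : ∀ a b, ‖h' a - h' b‖ ≤ L * ‖a - b‖ := by
    intro a b; simpa [hh', sub_sub_sub_cancel_right] using hlip a b
  set e := g' a - g' c with he
  have hdesc := descent hL hgh hliph a (a - (L⁻¹) • e)
  have hb : (a - (L⁻¹) • e) - a = -((L⁻¹) • e) := by abel
  rw [hb] at hdesc
  have hi : ⟪h' a, -((L⁻¹) • e)⟫_ℝ = -(L⁻¹ * ‖e‖ ^ 2) := by
    rw [inner_neg_right, real_inner_smul_right]
    have : h' a = e := rfl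
    rw [this, real_inner_self_eq_norm_sq]
  have hn : ‖-((L⁻¹) • e)‖ ^ 2 = L⁻¹ ^ 2 * ‖e‖ ^ 2 := by
    rw [norm_neg, norm_smul, Real.norm_eq_abs, abs_of_nonneg (inv_nonneg.mpr hL.le)]
    ring
  rw [hi, hn] at hdesc
  have hlb := convexlb hg hc c (a - (L⁻¹) • e)
  have hcb : h c ≤ h (a - (L⁻¹) • e) := by
    simp only [hh]
    have : ⟪g' c, (a - (L⁻¹) • e) - c⟫_ℝ
        = ⟪g' c, a - (L⁻¹) • e⟫_ℝ - ⟪g' c, c⟫_ℝ := by rw [← inner_sub_right]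
    linarith [hlb, this.symm.le, this.le]
  have hca : h c ≤ h a - L⁻¹ * ‖e‖ ^ 2 + L / 2 * (L⁻¹ ^ 2 * ‖e‖ ^ 2) := le_trans hcb hdesc
  have key : ‖e‖ ^ 2 ≤ 2 * L * (h a - h c) := by
    have hL' : L ≠ 0 := hL.ne'
    have : L⁻¹ * ‖e‖ ^ 2 - L / 2 * (L⁻¹ ^ 2 * ‖e‖ ^ 2) = ‖e‖ ^ 2 / (2 * L) := by
      field_simp; ring
    have h2L : 0 < 2 * L := by linarith
    have h7 : ‖e‖ ^ 2 / (2 * L) ≤ h a - h c := by linarith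
    have h8 := (div_le_iff₀ h2L).mp h7
    linarith
  have hfin : h a - h c = g a - g c - ⟪g' c, a - c⟫_ℝ := by
    simp only [hh]
    rw [inner_sub_right]; ring
  rw [hfin] at key
  exact key

end Helpers

/-- Expected value of `σ₊²` after the probabilistic update of the reference points. -/
theorem expected_sigma_after_reference_update
    {d m G : ℕ} (hm : 1 ≤ m)
    {ι : Type*} [DecidableEq ι] (𝒢 : Finset ι) (hne : 𝒢.Nonempty) (hcard : 𝒢.card = G)
    -- Assumption 1
    (f : Fin m → EuclideanSpace ℝ (Fin d) → ℝ)
    (Favg : EuclideanSpace ℝ (Fin d) → ℝ)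
    (hFavg : ∀ x, Favg x = (m : ℝ)⁻¹ * ∑ j : Fin m, f j x)
    (L μc : ℝ) (hL : 0 < L) (hμ : 0 < μc)
    (hdiff : ∀ j, Differentiable ℝ (f j))
    (hconv : ∀ j, ConvexOn ℝ Set.univ (f j))
    (hsmooth : ∀ j (x y : EuclideanSpace ℝ (Fin d)),
      ‖gradient (f j) x - gradient (f j) y‖ ≤ L * ‖x - y‖)
    (hstrong : ∀ x y : EuclideanSpace ℝ (Fin d),
      Favg x + ⟪gradient Favg x, y - x⟫_ℝ + μc / 2 * ‖y - x‖ ^ 2 ≤ Favg y)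
    (xstar : EuclideanSpace ℝ (Fin d))
    (hmin : ∀ y, Favg xstar ≤ Favg y)
    -- current point and reference points
    (x : EuclideanSpace ℝ (Fin d)) (w : ι → EuclideanSpace ℝ (Fin d))
    -- probabilistic update
    {Ω : Type*} {m0 : MeasurableSpace Ω} (P : Measure Ω) [IsProbabilityMeasure P]
    (p : ℝ) (hp0 : 0 < p) (hp1 : p ≤ 1)
    (Bv : ι → Ω → Bool)
    (hBmeas : ∀ i ∈ 𝒢, Measurable (Bv i))
    (hBern : ∀ i ∈ 𝒢, P {ω | Bv i ω = true} = ENNReal.ofReal p)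
    (hindep : iIndepFun
      (fun i : ↥𝒢 => Bv i.1) P)
    (wplus : ι → Ω → EuclideanSpace ℝ (Fin d))
    (hwplus : ∀ i ∈ 𝒢, ∀ ω, wplus i ω = if Bv i ω then x else w i) :
    ((∫ ω, ((G : ℝ) * (m : ℝ))⁻¹ * ∑ i ∈ 𝒢, ∑ j : Fin m,
          ‖gradient (f j) (wplus i ω) - gradient (f j) xstar‖ ^ 2 ∂P)
        = (1 - p) * (((G : ℝ) * (m : ℝ))⁻¹ * ∑ i ∈ 𝒢, ∑ j : Fin m,
              ‖gradient (f j) (w i) - gradient (f j) xstar‖ ^ 2)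
          + p / (m : ℝ) * ∑ j : Fin m, ‖gradient (f j) x - gradient (f j) xstar‖ ^ 2)
    ∧ ((∫ ω, ((G : ℝ) * (m : ℝ))⁻¹ * ∑ i ∈ 𝒢, ∑ j : Fin m,
          ‖gradient (f j) (wplus i ω) - gradient (f j) xstar‖ ^ 2 ∂P)
        ≤ (1 - p) * (((G : ℝ) * (m : ℝ))⁻¹ * ∑ i ∈ 𝒢, ∑ j : Fin m,
              ‖gradient (f j) (w i) - gradient (f j) xstar‖ ^ 2)
          + 2 * L * p * (Favg x - Favg xstar)) := by
  classical
  set c : ℝ := ((G : ℝ) * (m : ℝ))⁻¹ with hc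
  set A : Fin m → ℝ := fun j => ‖gradient (f j) x - gradient (f j) xstar‖ ^ 2 with hA
  set B : ι → Fin m → ℝ := fun i j => ‖gradient (f j) (w i) - gradient (f j) xstar‖ ^ 2 with hB
  have hm0 : (0:ℝ) < (m : ℝ) := by exact_mod_cast hm
  have hG0 : (0:ℝ) < (G : ℝ) := by
    have := Finset.card_pos.mpr hne
    rw [hcard] at this
    exact_mod_cast this
  have hgrad : ∀ j (z : EuclideanSpace ℝ (Fin d)),
      HasGradientAt (f j) (gradient (f j) z) z := fun j z => (hdiff j z).hasGradientAt
  -- per-coordinate Bernoulli integral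
  have hiter : ∀ i ∈ 𝒢, ∀ aa rr : ℝ,
      Integrable (fun ω => if Bv i ω then aa else rr) P ∧
      (∫ ω, (if Bv i ω then aa else rr) ∂P) = p * aa + (1 - p) * rr := by
    intro i hi aa rr
    have hSm : MeasurableSet {ω | Bv i ω = true} := (hBmeas i hi) (measurableSet_singleton true)
    have heq : (fun ω => if Bv i ω then aa else rr)
        = fun ω => Set.indicator {ω | Bv i ω = true} (fun _ => aa - rr) ω + rr := by
      funext ω
      by_cases h : Bv i ω
      · simp [Set.indicator_of_mem, h, Set.mem_setOf_eq]
      · simp [Set.indicator_of_notMem, h, Set.mem_setOf_eq]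
    constructor
    · rw [heq]
      exact ((integrable_const _).indicator hSm).add (integrable_const _)
    · rw [heq, integral_add (((integrable_const _)).indicator hSm) (integrable_const _),
        integral_indicator_const _ hSm, integral_const]
      simp [measureReal_def, hBern i hi, ENNReal.toReal_ofReal hp0.le]
      ring
  -- rewrite integrand
  have hfun : (fun ω => c * ∑ i ∈ 𝒢, ∑ j : Fin m,
        ‖gradient (f j) (wplus i ω) - gradient (f j) xstar‖ ^ 2)
      = fun ω => c * ∑ i ∈ 𝒢, ∑ j : Fin m, (if Bv i ω then A j else B i j) := by
    funext ω
    congr 1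
    refine Finset.sum_congr rfl fun i hi => Finset.sum_congr rfl fun j _ => ?_
    rw [hwplus i hi ω]
    by_cases h : Bv i ω <;> simp [h, hA, hB]
  have hIint : ∀ i ∈ 𝒢, ∀ j : Fin m,
      Integrable (fun ω => if Bv i ω then A j else B i j) P :=
    fun i hi j => (hiter i hi (A j) (B i j)).1
  -- compute the integral
  have hval : (∫ ω, c * ∑ i ∈ 𝒢, ∑ j : Fin m,
        ‖gradient (f j) (wplus i ω) - gradient (f j) xstar‖ ^ 2 ∂P)
      = c * ∑ i ∈ 𝒢, ∑ j : Fin m, (p * A j + (1 - p) * B i j) := by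
    rw [hfun, MeasureTheory.integral_const_mul]
    congr 1
    rw [integral_finset_sum _ (fun i hi => integrable_finset_sum _ (fun j _ => hIint i hi j))]
    refine Finset.sum_congr rfl fun i hi => ?_
    rw [integral_finset_sum _ (fun j _ => hIint i hi j)]
    exact Finset.sum_congr rfl fun j _ => (hiter i hi (A j) (B i j)).2
  have hsumeq : ∑ i ∈ 𝒢, ∑ j : Fin m, (p * A j + (1 - p) * B i j)
      = (G : ℝ) * p * ∑ j : Fin m, A j + (1 - p) * ∑ i ∈ 𝒢, ∑ j : Fin m, B i j := by
    have : ∀ i ∈ 𝒢, ∑ j : Fin m, (p * A j + (1 - p) * B i j)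
        = p * ∑ j : Fin m, A j + (1 - p) * ∑ j : Fin m, B i j := by
      intro i _
      rw [Finset.sum_add_distrib, ← Finset.mul_sum, ← Finset.mul_sum]
    rw [Finset.sum_congr rfl this, Finset.sum_add_distrib, Finset.sum_const, ← Finset.mul_sum,
      hcard]
    simp only [nsmul_eq_mul]
    ring
  have heq1 : (∫ ω, c * ∑ i ∈ 𝒢, ∑ j : Fin m,
        ‖gradient (f j) (wplus i ω) - gradient (f j) xstar‖ ^ 2 ∂P)
      = (1 - p) * (c * ∑ i ∈ 𝒢, ∑ j : Fin m, B i j) + p / (m : ℝ) * ∑ j : Fin m, A j := by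
    rw [hval, hsumeq, hc]
    field_simp
    ring
  refine ⟨heq1, ?_⟩
  rw [heq1]
  -- inequality part
  have hsum0 : ∑ j : Fin m, gradient (f j) xstar = 0 := by
    have hFfun : Favg = fun y => (m : ℝ)⁻¹ * ∑ j : Fin m, f j y := funext hFavg
    have hFder : HasFDerivAt Favg
        ((m : ℝ)⁻¹ • ∑ j : Fin m,
          (InnerProductSpace.toDual ℝ (EuclideanSpace ℝ (Fin d))) (gradient (f j) xstar)) xstar := by
      rw [hFfun]
      exact (HasFDerivAt.fun_sum fun j _ =>
        hasGradientAt_iff_hasFDerivAt.mp (hgrad j xstar)).const_mul _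
    have hloc : IsLocalMin Favg xstar := Filter.Eventually.of_forall hmin
    have hz : fderiv ℝ Favg xstar = 0 := hloc.fderiv_eq_zero
    have h1 := hFder.fderiv
    rw [hz] at h1
    have h2 : ∑ j : Fin m,
        (InnerProductSpace.toDual ℝ (EuclideanSpace ℝ (Fin d))) (gradient (f j) xstar) = 0 := by
      have := h1.symm
      rcases smul_eq_zero.mp this with h | h
      · exact absurd h (by positivity)
      · exact h
    have h3 : (InnerProductSpace.toDual ℝ (EuclideanSpace ℝ (Fin d)))
        (∑ j : Fin m, gradient (f j) xstar) = 0 := by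
      rw [map_sum]; exact h2
    have := (InnerProductSpace.toDual ℝ (EuclideanSpace ℝ (Fin d))).injective
      (h3.trans (map_zero _).symm)
    exact this
  have hkey : ∑ j : Fin m, A j ≤ 2 * L * ((m : ℝ) * (Favg x - Favg xstar)) := by
    have hcc : ∀ j : Fin m, A j ≤ 2 * L *
        (f j x - f j xstar - ⟪gradient (f j) xstar, x - xstar⟫_ℝ) :=
      fun j => cocoercive hL (hgrad j) (hsmooth j) (hconv j) x xstar
    calc ∑ j : Fin m, A j
        ≤ ∑ j : Fin m, 2 * L * (f j x - f j xstar - ⟪gradient (f j) xstar, x - xstar⟫_ℝ) :=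
          Finset.sum_le_sum fun j _ => hcc j
      _ = 2 * L * ((∑ j : Fin m, f j x) - (∑ j : Fin m, f j xstar)
            - ⟪∑ j : Fin m, gradient (f j) xstar, x - xstar⟫_ℝ) := by
          rw [← Finset.mul_sum, sum_inner, Finset.sum_sub_distrib, Finset.sum_sub_distrib]
      _ = 2 * L * ((m : ℝ) * (Favg x - Favg xstar)) := by
          rw [hsum0, inner_zero_left, hFavg x, hFavg xstar]
          field_simp
          rw [sub_zero]
  have hineq : p / (m : ℝ) * ∑ j : Fin m, A j ≤ 2 * L * p * (Favg x - Favg xstar) := by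
    have h1 : p / (m : ℝ) * ∑ j : Fin m, A j
        ≤ p / (m : ℝ) * (2 * L * ((m : ℝ) * (Favg x - Favg xstar))) :=
      mul_le_mul_of_nonneg_left hkey (by positivity)
    have h2 : p / (m : ℝ) * (2 * L * ((m : ℝ) * (Favg x - Favg xstar)))
        = 2 * L * p * (Favg x - Favg xstar) := by
      field_simp
    linarith
  linarith
end
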